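/- arXiv:1602.04426 — 10 statements merged into one kernel-verified Lean document; each statement's English description precedes it below -/
import Mathlib

section
/- Let A be a symmetric n×n matrix and X = QQᵀ with Q ∈ ℝ^{n×2} having unit-norm rows. If ddiag(AX) − A∘X ⪰ 0 (the second-order optimality condition), then for the planted vector z ∈ {±1}ⁿ, ⟨A, X⟩ ≥ ⟨A, X ∘ X ∘ (zzᵀ)⟩. -/
open Matrix BigOperators

noncomputable def ddiag {n : ℕ} (A : Matrix (Fin n) (Fin n) ℝ) : Matrix (Fin n) (Fin n) ℝ :=
  Matrix.diagonal (fun i => A i i)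

noncomputable def opNorm {n : ℕ} (M : Matrix (Fin n) (Fin n) ℝ) : ℝ :=
  ‖(Matrix.toEuclideanLin M).toContinuousLinearMap‖

noncomputable def minner {n : ℕ} (A B : Matrix (Fin n) (Fin n) ℝ) : ℝ :=
  ∑ i, ∑ j, A i j * B i j

/-- Second-order condition implies ⟨A, X⟩ ≥ ⟨A, X∘X∘zzᵀ⟩. -/
theorem stmt3 {n : ℕ} (A : Matrix (Fin n) (Fin n) ℝ) (hA : A.IsSymm)
    (Q : Matrix (Fin n) (Fin 2) ℝ) (hrows : ∀ i, (Q i 0) ^ 2 + (Q i 1) ^ 2 = 1)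
    (z : Fin n → ℝ) (hz : ∀ i, z i = 1 ∨ z i = -1)
    (X : Matrix (Fin n) (Fin n) ℝ) (hXdef : X = Q * Qᵀ)
    (hso : (ddiag (A * X) - A.hadamard X).PosSemidef) :
    minner A (X.hadamard (X.hadamard (vecMulVec z z))) ≤ minner A X := by
  set M : Matrix (Fin n) (Fin n) ℝ := ddiag (A * X) - A.hadamard X with hM
  have hz2 : ∀ i, z i * z i = 1 := by
    intro i; rcases hz i with h | h <;> rw [h] <;> ring
  have hXsum : ∀ i j, X i j = Q i 0 * Q j 0 + Q i 1 * Q j 1 := by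
    intro i j
    simp [hXdef, Matrix.mul_apply, Fin.sum_univ_two, Matrix.transpose_apply]
  have hX1 : ∀ i, X i i = 1 := by
    intro i; rw [hXsum i i, ← sq, ← sq, hrows i]
  -- key positivity: sum over the two columns of diag(z) * Q
  have key : 0 ≤ ∑ i, ∑ j, (z i * z j * X i j) * M i j := by
    have h := fun k : Fin 2 => hso.dotProduct_mulVec_nonneg (fun i => z i * Q i k)
    have hsum : 0 ≤ ∑ k : Fin 2, (star (fun i => z i * Q i k)) ⬝ᵥ
        (M *ᵥ (fun i => z i * Q i k)) :=
      Finset.sum_nonneg fun k _ => h k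
    calc (0:ℝ) ≤ ∑ k : Fin 2, (star (fun i => z i * Q i k)) ⬝ᵥ
        (M *ᵥ (fun i => z i * Q i k)) := hsum
      _ = ∑ i, ∑ j, (z i * z j * X i j) * M i j := by
          simp only [dotProduct, Matrix.mulVec, Pi.star_apply, star_trivial, dotProduct,
            Finset.mul_sum]
          rw [Finset.sum_comm]
          refine Finset.sum_congr rfl fun i _ => ?_
          rw [Finset.sum_comm]
          refine Finset.sum_congr rfl fun j _ => ?_
          rw [Fin.sum_univ_two, hXsum i j]
          ring
  -- expand the inner product with M
  have expand : ∑ i, ∑ j, (z i * z j * X i j) * M i j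
      = minner A X - minner A (X.hadamard (X.hadamard (vecMulVec z z))) := by
    have h1 : ∑ i, ∑ j, (z i * z j * X i j) * M i j
        = (∑ i, (A * X) i i) - ∑ i, ∑ j, (z i * z j * X i j) * (A i j * X i j) := by
      simp only [hM, Matrix.sub_apply, Matrix.hadamard_apply, mul_sub, Finset.sum_sub_distrib]
      congr 1
      refine Finset.sum_congr rfl fun i _ => ?_
      rw [Finset.sum_eq_single i]
      · simp [ddiag, Matrix.diagonal_apply_eq, hX1 i, hz2 i]
      · intro j _ hji
        simp [ddiag, Matrix.diagonal_apply_ne' _ hji]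
      · intro h; exact absurd (Finset.mem_univ i) h
    have h2 : ∑ i, (A * X) i i = minner A X := by
      simp only [Matrix.mul_apply, minner]
      refine Finset.sum_congr rfl fun i _ => Finset.sum_congr rfl fun j _ => ?_
      have : X j i = X i j := by rw [hXsum, hXsum]; ring
      rw [this]
    have h3 : ∑ i, ∑ j, (z i * z j * X i j) * (A i j * X i j)
        = minner A (X.hadamard (X.hadamard (vecMulVec z z))) := by
      simp only [minner, Matrix.hadamard_apply, Matrix.vecMulVec_apply]
      refine Finset.sum_congr rfl fun i _ => Finset.sum_congr rfl fun j _ => ?_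
      ring
    rw [h1, h2, h3]
  linarith [expand ▸ key]
end

section
/- Let A be a symmetric n×n matrix and q ∈ {±1}ⁿ. Set Q = [q, 0] ∈ ℝ^{n×2} and X = QQᵀ = qqᵀ. If the second-order condition ddiag(AX) − A∘X ⪰ 0 holds, then the matrix S = ddiag(AX) − A is positive semidefinite. -/
open Matrix BigOperators

/-- At a rank-one point X = qqᵀ, the second-order condition implies S = ddiag(AX) − A ⪰ 0. -/
theorem stmt6 {n : ℕ} (A : Matrix (Fin n) (Fin n) ℝ) (hA : A.IsSymm)
    (q : Fin n → ℝ) (hq : ∀ i, q i = 1 ∨ q i = -1)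
    (X : Matrix (Fin n) (Fin n) ℝ) (hXdef : X = vecMulVec q q)
    (hso : (ddiag (A * X) - A.hadamard X).PosSemidef) :
    (ddiag (A * X) - A).PosSemidef := by
  have hq2 : ∀ i, q i * q i = 1 := by
    intro i; rcases hq i with h | h <;> rw [h] <;> norm_num
  have hq2' : ∀ i, q i ^ 2 = 1 := by
    intro i; rw [sq]; exact hq2 i
  refine Matrix.PosSemidef.of_dotProduct_mulVec_nonneg ?_ ?_
  · unfold ddiag
    unfold Matrix.IsHermitian
    ext i j
    simp only [Matrix.conjTranspose_apply, Matrix.sub_apply, Matrix.diagonal_apply, star_trivial]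
    rcases eq_or_ne i j with h | h
    · subst h; simp
    · simp only [h, Ne.symm h, if_false]
      rw [hA.apply i j]
  · intro u
    have h := hso.dotProduct_mulVec_nonneg (fun i => u i * q i)
    simp only [Matrix.sub_mulVec, dotProduct_sub, dotProduct,
      Matrix.mulVec, Matrix.sub_apply, Matrix.hadamard_apply, hXdef,
      Matrix.vecMulVec_apply, ddiag, star_trivial, Pi.star_apply] at h ⊢
    refine le_trans h (le_of_eq ?_)
    apply Finset.sum_congr rfl; intro i _
    rw [Finset.mul_sum, Finset.mul_sum]
    apply Finset.sum_congr rfl; intro j _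
    rcases eq_or_ne i j with rfl | hij
    · simp only [Matrix.diagonal_apply_eq]
      linear_combination (u i ^ 2 * ((A * vecMulVec q q) i i) - u i ^ 2 * A i i * (q i ^ 2 + 1)) * hq2' i
    · simp only [Matrix.diagonal_apply, hij, if_false]
      linear_combination (-A i j * u i * u j) * hq2' i + (-A i j * u i * u j * q i ^ 2) * hq2' j
end

section
/- Let A be a symmetric n×n matrix and Q ∈ ℝ^{n×2} with unit-norm rows. If S = ddiag(AQQᵀ) − A is positive semidefinite, then Q is a global maximizer of Tr(Q̃ᵀAQ̃) over all Q̃ ∈ ℝ^{n×2} with unit-norm rows. -/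
open Matrix BigOperators

lemma trace_conj_diag {n : ℕ} (d : Fin n → ℝ) (Q' : Matrix (Fin n) (Fin 2) ℝ)
    (h : ∀ i, (Q' i 0) ^ 2 + (Q' i 1) ^ 2 = 1) :
    Matrix.trace (Q'ᵀ * Matrix.diagonal d * Q') = ∑ i, d i := by
  have e : Matrix.trace (Q'ᵀ * Matrix.diagonal d * Q')
      = ∑ j : Fin 2, ∑ k, Q' k j * (d k * Q' k j) := by
    rw [Matrix.mul_assoc]
    simp [Matrix.trace, Matrix.diag, Matrix.mul_apply, Matrix.diagonal_apply, ite_mul,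
      Finset.sum_ite_eq, Fin.sum_univ_two]
  rw [e, Finset.sum_comm]
  refine Finset.sum_congr rfl fun k _ => ?_
  rw [Fin.sum_univ_two]
  linear_combination d k * h k

lemma trace_conj_nonneg {n : ℕ} (S : Matrix (Fin n) (Fin n) ℝ) (hS : S.PosSemidef)
    (Q' : Matrix (Fin n) (Fin 2) ℝ) :
    0 ≤ Matrix.trace (Q'ᵀ * S * Q') := by
  set v : Fin 2 → Fin n → ℝ := fun j i => Q' i j with hv
  have e : Matrix.trace (Q'ᵀ * S * Q')
      = ∑ j : Fin 2, v j ⬝ᵥ (S *ᵥ v j) := by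
    simp only [Matrix.trace, Matrix.diag, Matrix.mul_apply, Matrix.transpose_apply,
      dotProduct, Matrix.mulVec, Finset.sum_mul, Finset.mul_sum]
    refine Finset.sum_congr rfl fun j _ => ?_
    rw [Finset.sum_comm]
    exact Finset.sum_congr rfl fun i _ => Finset.sum_congr rfl fun k _ => by ring
  rw [e]
  refine Finset.sum_nonneg fun j _ => ?_
  simpa using hS.dotProduct_mulVec_nonneg (v j)

/-- If S = ddiag(AQQᵀ) − A ⪰ 0 then Q is a global maximizer. -/
theorem stmt7 {n : ℕ} (A : Matrix (Fin n) (Fin n) ℝ) (hA : A.IsSymm)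
    (Q : Matrix (Fin n) (Fin 2) ℝ) (hrows : ∀ i, (Q i 0) ^ 2 + (Q i 1) ^ 2 = 1)
    (hS : (ddiag (A * Q * Qᵀ) - A).PosSemidef) :
    ∀ Q' : Matrix (Fin n) (Fin 2) ℝ, (∀ i, (Q' i 0) ^ 2 + (Q' i 1) ^ 2 = 1) →
      Matrix.trace (Q'ᵀ * A * Q') ≤ Matrix.trace (Qᵀ * A * Q) := by
  intro Q' hrows'
  set M := A * Q * Qᵀ with hM
  have hQ : Matrix.trace (Qᵀ * A * Q) = ∑ i, M i i := by
    have h2 : M.trace = (Qᵀ * A * Q).trace := by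
      rw [hM, Matrix.trace_mul_cycle]
    rw [← h2]
    rfl
  have hsplit : Matrix.trace (Q'ᵀ * (ddiag M - A) * Q')
      = Matrix.trace (Q'ᵀ * Matrix.diagonal (fun i => M i i) * Q')
        - Matrix.trace (Q'ᵀ * A * Q') := by
    rw [Matrix.mul_sub, Matrix.sub_mul, Matrix.trace_sub]
    rfl
  have h1 := trace_conj_nonneg _ hS Q'
  rw [hsplit, trace_conj_diag _ _ hrows'] at h1
  rw [hQ]
  linarith
end

section
/- Let z ∈ {±1}ⁿ and A = zzᵀ + σΔ with Δ symmetric, diag(Δ) = 0, ‖Δ‖ ≤ γ√n, ‖Δz‖_∞ ≤ γ√(n log n), and σ = c√n. If γc < 1/(1 + √(log n)), then S = ddiag(Azzᵀ) − A is positive semidefinite with kernel exactly span(z), i.e., Sz = 0 and uᵀSu > 0 for all nonzero u orthogonal to z. -/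
open Matrix BigOperators

lemma dot_opNorm_bound {n : ℕ} (M : Matrix (Fin n) (Fin n) ℝ) (v : Fin n → ℝ) :
    |v ⬝ᵥ M.mulVec v| ≤ opNorm M * ∑ i, v i ^ 2 := by
  set w : EuclideanSpace ℝ (Fin n) := WithLp.toLp 2 v with hw
  have h1 : v ⬝ᵥ M.mulVec v = inner ℝ w ((Matrix.toEuclideanLin M).toContinuousLinearMap w) := by
    simp [PiLp.inner_apply, dotProduct, RCLike.inner_apply, mul_comm]
    rfl
  have h2 : ∑ i, v i ^ 2 = ‖w‖ ^ 2 := by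
    rw [EuclideanSpace.norm_eq]
    rw [Real.sq_sqrt (by positivity)]
    simp [sq_abs, hw]
  rw [h1, h2]
  calc |inner ℝ w ((Matrix.toEuclideanLin M).toContinuousLinearMap w)|
      ≤ ‖w‖ * ‖(Matrix.toEuclideanLin M).toContinuousLinearMap w‖ := by
        simpa using abs_real_inner_le_norm w _
    _ ≤ ‖w‖ * (opNorm M * ‖w‖) := by
        gcongr
        exact (Matrix.toEuclideanLin M).toContinuousLinearMap.le_opNorm w
    _ = opNorm M * ‖w‖ ^ 2 := by ring

/-- In the low-noise regime, S = ddiag(Azzᵀ) − A is PSD with kernel exactly span(z). -/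
theorem stmt8 {n : ℕ} (z : Fin n → ℝ) (hz : ∀ i, z i = 1 ∨ z i = -1)
    (Δ A S : Matrix (Fin n) (Fin n) ℝ) (hΔs : Δ.IsSymm) (hΔd : ∀ i, Δ i i = 0)
    (σ c γ : ℝ) (hc : 0 ≤ c) (hγ : 0 ≤ γ) (hσ : σ = c * Real.sqrt n)
    (hΔop : opNorm Δ ≤ γ * Real.sqrt n)
    (hΔz : ∀ i, |Δ.mulVec z i| ≤ γ * Real.sqrt (n * Real.log n))
    (hAdef : A = vecMulVec z z + σ • Δ)
    (hSdef : S = ddiag (A * vecMulVec z z) - A)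
    (hgc : γ * c < 1 / (1 + Real.sqrt (Real.log n))) :
    S.PosSemidef ∧ S.mulVec z = 0 ∧
      ∀ u : Fin n → ℝ, u ≠ 0 → (∑ i, u i * z i = 0) → 0 < u ⬝ᵥ S.mulVec u := by
  have hz2 : ∀ i, z i * z i = 1 := by
    intro i; rcases hz i with h | h <;> rw [h] <;> norm_num
  have hzz : z ⬝ᵥ z = (n : ℝ) := by
    simp [dotProduct, hz2]
  set d : Fin n → ℝ := fun i => (n : ℝ) + σ * (z i * Δ.mulVec z i) with hd
  -- explicit form of S
  have hSd : S = Matrix.diagonal d - vecMulVec z z - σ • Δ := by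
    have hdiag : ∀ i, (A * vecMulVec z z) i i = d i := by
      intro i
      simp only [hAdef, Matrix.mul_apply, Matrix.add_apply, Matrix.smul_apply,
        vecMulVec_apply, smul_eq_mul, add_mul]
      rw [Finset.sum_add_distrib]
      congr 1
      · have h : ∀ j ∈ Finset.univ, z i * z j * (z j * z i) = 1 := by
          intro j _
          linear_combination (z j * z j) * hz2 i + hz2 j
        rw [Finset.sum_congr rfl h]; simp
      · simp only [Matrix.mulVec, dotProduct, Finset.mul_sum]
        apply Finset.sum_congr rfl
        intro j _; ring
    rw [hSdef, hAdef, ddiag]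
    have : (fun i => (A * vecMulVec z z) i i) = d := funext hdiag
    rw [hAdef] at this
    rw [this]; abel
  -- quadratic form formula
  have hq : ∀ x : Fin n → ℝ, x ⬝ᵥ S.mulVec x =
      (n : ℝ) * (∑ i, x i ^ 2) + σ * (∑ i, z i * Δ.mulVec z i * x i ^ 2)
        - (∑ i, x i * z i) ^ 2 - σ * (x ⬝ᵥ Δ.mulVec x) := by
    intro x
    rw [hSd]
    simp only [Matrix.sub_mulVec, Matrix.smul_mulVec, dotProduct_sub, dotProduct_smul,
      smul_eq_mul]
    have h1 : x ⬝ᵥ (Matrix.diagonal d).mulVec x = ∑ i, d i * x i ^ 2 := by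
      simp [dotProduct, Matrix.mulVec_diagonal]
      congr 1; ext i; ring
    have h2 : x ⬝ᵥ (vecMulVec z z).mulVec x = (∑ i, x i * z i) ^ 2 := by
      simp only [dotProduct, Matrix.mulVec, vecMulVec_apply, Finset.mul_sum]
      rw [sq, Finset.sum_mul_sum]
      apply Finset.sum_congr rfl
      intro i _
      apply Finset.sum_congr rfl
      intro j _; ring
    rw [h1, h2]
    have h3 : ∑ i, d i * x i ^ 2
        = (n : ℝ) * (∑ i, x i ^ 2) + σ * ∑ i, z i * Δ.mulVec z i * x i ^ 2 := by
      rw [Finset.mul_sum, Finset.mul_sum, ← Finset.sum_add_distrib]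
      apply Finset.sum_congr rfl
      intro i _
      simp only [hd]; ring
    rw [h3]
  -- S z = 0
  have hSz : S.mulVec z = 0 := by
    rw [hSd]
    ext i
    simp only [Matrix.sub_mulVec, Matrix.smul_mulVec, Pi.sub_apply, Pi.smul_apply,
      smul_eq_mul, Pi.zero_apply, Matrix.mulVec_diagonal]
    have h2 : (vecMulVec z z).mulVec z i = (n : ℝ) * z i := by
      simp only [Matrix.mulVec, dotProduct, vecMulVec_apply]
      have h : ∀ j ∈ Finset.univ, z i * z j * z j = z i := by
        intro j _; linear_combination (z i) * hz2 j
      rw [Finset.sum_congr rfl h]; simp [mul_comm]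
    rw [h2]
    simp only [hd]
    linear_combination (σ * Δ.mulVec z i) * hz2 i
  -- basic positivity facts
  have hlog : 0 ≤ Real.sqrt (Real.log n) := Real.sqrt_nonneg _
  have hcoef : 0 < 1 - γ * c * (1 + Real.sqrt (Real.log n)) := by
    have h1 : (0:ℝ) < 1 + Real.sqrt (Real.log n) := by linarith
    have h2 : γ * c * (1 + Real.sqrt (Real.log n)) < 1 := by
      have h3 := mul_lt_mul_of_pos_right hgc h1
      rwa [one_div, inv_mul_cancel₀ (ne_of_gt h1)] at h3
    linarith
  have hσn : 0 ≤ σ := by rw [hσ]; positivity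
  -- key lower bound for u ⟂ z
  have hkey : ∀ u : Fin n → ℝ, (∑ i, u i * z i = 0) →
      (n : ℝ) * (1 - γ * c * (1 + Real.sqrt (Real.log n))) * (∑ i, u i ^ 2)
        ≤ u ⬝ᵥ S.mulVec u := by
    intro u hu
    rw [hq u, hu]
    have hsum : 0 ≤ ∑ i, u i ^ 2 := by positivity
    have B1 : -(γ * Real.sqrt (n * Real.log n)) * (∑ i, u i ^ 2)
        ≤ ∑ i, z i * Δ.mulVec z i * u i ^ 2 := by
      rw [neg_mul, Finset.mul_sum, ← Finset.sum_neg_distrib]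
      apply Finset.sum_le_sum
      intro i _
      have h1 : |z i * Δ.mulVec z i| ≤ γ * Real.sqrt (n * Real.log n) := by
        rw [abs_mul]
        rcases hz i with h | h <;> rw [h] <;> simpa using hΔz i
      have h2 : 0 ≤ u i ^ 2 := sq_nonneg _
      nlinarith [neg_abs_le (z i * Δ.mulVec z i)]
    have B2 : u ⬝ᵥ Δ.mulVec u ≤ γ * Real.sqrt n * (∑ i, u i ^ 2) := by
      have := dot_opNorm_bound Δ u
      have h3 : opNorm Δ * (∑ i, u i ^ 2) ≤ γ * Real.sqrt n * (∑ i, u i ^ 2) := by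
        apply mul_le_mul_of_nonneg_right hΔop hsum
      nlinarith [le_abs_self (u ⬝ᵥ Δ.mulVec u)]
    have hs : Real.sqrt n * Real.sqrt n = (n : ℝ) := Real.mul_self_sqrt (Nat.cast_nonneg n)
    have e1 : σ * (γ * Real.sqrt (n * Real.log n)) = γ * c * ((n:ℝ) * Real.sqrt (Real.log n)) := by
      rw [hσ, Real.sqrt_mul (Nat.cast_nonneg n)]
      linear_combination c * γ * Real.sqrt (Real.log n) * hs
    have e2 : σ * (γ * Real.sqrt n) = γ * c * (n : ℝ) := by
      rw [hσ]
      linear_combination c * γ * hs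
    have B1' : -(σ * (γ * Real.sqrt (n * Real.log n))) * (∑ i, u i ^ 2)
        ≤ σ * ∑ i, z i * Δ.mulVec z i * u i ^ 2 := by
      have := mul_le_mul_of_nonneg_left B1 hσn
      nlinarith [this]
    have B2' : σ * (u ⬝ᵥ Δ.mulVec u) ≤ σ * (γ * Real.sqrt n) * (∑ i, u i ^ 2) := by
      have := mul_le_mul_of_nonneg_left B2 hσn
      nlinarith [this]
    nlinarith [B1', B2', e1, e2]
  have hcoef0 : 0 ≤ (n : ℝ) * (1 - γ * c * (1 + Real.sqrt (Real.log n))) := by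
    have : (0:ℝ) ≤ n := Nat.cast_nonneg n
    nlinarith
  -- symmetry of S
  have hSsym : S.IsSymm := by
    rw [hSd]
    unfold Matrix.IsSymm
    rw [Matrix.transpose_sub, Matrix.transpose_sub, Matrix.transpose_smul, hΔs.eq,
      Matrix.diagonal_transpose]
    congr 1
    congr 1
    ext i j
    simp [vecMulVec_apply, mul_comm]
  constructor
  · -- PosSemidef
    rw [Matrix.posSemidef_iff_dotProduct_mulVec]
    constructor
    · exact hSsym
    · intro x
      rcases Nat.eq_zero_or_pos n with hn | hn
      · subst hn
        simp [dotProduct]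
      · have hnpos : (0:ℝ) < n := by exact_mod_cast hn
        set α : ℝ := (x ⬝ᵥ z) / n with hα
        set u : Fin n → ℝ := x - α • z with huu
        have hu : ∑ i, u i * z i = 0 := by
          simp only [huu, Pi.sub_apply, Pi.smul_apply, smul_eq_mul, sub_mul,
            Finset.sum_sub_distrib]
          have h1 : ∑ i, α * z i * z i = α * (n : ℝ) := by
            have h : ∀ i ∈ Finset.univ, α * z i * z i = α := by
              intro i _; linear_combination α * hz2 i
            rw [Finset.sum_congr rfl h]
            simp [mul_comm]
          rw [h1, hα, dotProduct]
          rw [div_mul_cancel₀ _ (ne_of_gt hnpos), sub_self]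
        have hxu : x ⬝ᵥ S.mulVec x = u ⬝ᵥ S.mulVec u := by
          have hx : x = u + α • z := by rw [huu]; abel
          rw [hx]
          rw [Matrix.mulVec_add, Matrix.mulVec_smul, hSz, smul_zero, add_zero,
            add_dotProduct]
          have hzSu : z ⬝ᵥ S.mulVec u = u ⬝ᵥ S.mulVec z := by
            rw [Matrix.dotProduct_mulVec, ← Matrix.mulVec_transpose, hSsym.eq,
              dotProduct_comm]
          rw [smul_dotProduct, hzSu, hSz]
          simp
        rw [star_trivial, hxu]
        calc (0:ℝ) ≤ (n : ℝ) * (1 - γ * c * (1 + Real.sqrt (Real.log n))) * (∑ i, u i ^ 2) := by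
              positivity
          _ ≤ u ⬝ᵥ S.mulVec u := hkey u hu
  constructor
  · exact hSz
  · intro u hune hu
    have hnpos : 0 < n := by
      rcases Nat.eq_zero_or_pos n with hn | hn
      · exfalso; apply hune; subst hn; ext i; exact absurd i.2 (by simp)
      · exact hn
    have hnpos' : (0:ℝ) < n := by exact_mod_cast hnpos
    obtain ⟨i, hi⟩ : ∃ i, u i ≠ 0 := by
      by_contra h
      push_neg at h
      exact hune (funext h)
    have hsum : 0 < ∑ i, u i ^ 2 := by
      apply Finset.sum_pos' (fun j _ => sq_nonneg _)
      exact ⟨i, Finset.mem_univ i, by positivity⟩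
    calc (0:ℝ) < (n : ℝ) * (1 - γ * c * (1 + Real.sqrt (Real.log n))) * (∑ i, u i ^ 2) := by
          positivity
      _ ≤ u ⬝ᵥ S.mulVec u := hkey u hu
end

section
/- Let z ∈ {±1}ⁿ and suppose S = ddiag(Azzᵀ) − A is positive semidefinite with kernel exactly span(z). Then zzᵀ is the unique maximizer of Tr(AX) over symmetric PSD matrices X with unit diagonal. -/
open Matrix BigOperators

lemma trace_mul_transpose_sq' {n : ℕ} (B : Matrix (Fin n) (Fin n) ℝ) :
    Matrix.trace (B * Bᵀ) = ∑ i, ∑ j, (B i j)^2 := by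
  simp [Matrix.trace, Matrix.diag, Matrix.mul_apply, sq]

open scoped MatrixOrder in
lemma psd_trace_mul' {n : ℕ} (S X : Matrix (Fin n) (Fin n) ℝ)
    (hS : S.PosSemidef) (hX : X.PosSemidef) :
    0 ≤ Matrix.trace (S * X) ∧ (Matrix.trace (S * X) = 0 → S * X = 0) := by
  set C := CFC.sqrt S with hCdef
  set Y := CFC.sqrt X with hYdef
  have hC : C * C = S := CFC.sqrt_mul_sqrt_self S hS.nonneg
  have hY : Y * Y = X := CFC.sqrt_mul_sqrt_self X hX.nonneg
  have hCt : Cᵀ = C := (CFC.sqrt_nonneg S).posSemidef.isHermitian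
  have hYt : Yᵀ = Y := (CFC.sqrt_nonneg X).posSemidef.isHermitian
  have key : Matrix.trace (S * X) = Matrix.trace ((C * Y) * (C * Y)ᵀ) := by
    rw [Matrix.transpose_mul, hCt, hYt, ← hC, ← hY]
    rw [Matrix.mul_assoc, ← Matrix.mul_assoc C Y Y, Matrix.trace_mul_comm]
    rw [Matrix.mul_assoc, Matrix.mul_assoc]
  rw [key, trace_mul_transpose_sq']
  constructor
  · positivity
  · intro h
    have hB : C * Y = 0 := by
      ext i j
      have h1 : ∀ i ∈ (Finset.univ : Finset (Fin n)), 0 ≤ ∑ j, ((C*Y) i j)^2 := by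
        intro i _; positivity
      have h2 := (Finset.sum_eq_zero_iff_of_nonneg h1).mp h i (Finset.mem_univ i)
      have h3 : ∀ j ∈ (Finset.univ : Finset (Fin n)), 0 ≤ ((C*Y) i j)^2 := by
        intro j _; positivity
      have h4 := (Finset.sum_eq_zero_iff_of_nonneg h3).mp h2 j (Finset.mem_univ j)
      simpa using pow_eq_zero_iff (n := 2) (by norm_num) |>.mp h4
    calc S * X = C * (C * Y) * Y := by rw [← hC, ← hY]; noncomm_ring
    _ = 0 := by rw [hB]; simp

/-- If S = ddiag(Azzᵀ) − A is PSD with kernel exactly span(z), then zzᵀ is the unique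
maximizer of Tr(AX) over PSD matrices with unit diagonal. -/
theorem stmt9 {n : ℕ} (A : Matrix (Fin n) (Fin n) ℝ) (hA : A.IsSymm)
    (z : Fin n → ℝ) (hz : ∀ i, z i = 1 ∨ z i = -1)
    (S : Matrix (Fin n) (Fin n) ℝ) (hSdef : S = ddiag (A * vecMulVec z z) - A)
    (hpsd : S.PosSemidef) (hSz : S.mulVec z = 0)
    (hker : ∀ u : Fin n → ℝ, S.mulVec u = 0 → ∃ t : ℝ, u = t • z) :
    (∀ X : Matrix (Fin n) (Fin n) ℝ, X.PosSemidef → (∀ i, X i i = 1) →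
      Matrix.trace (A * X) ≤ Matrix.trace (A * vecMulVec z z)) ∧
    (∀ X : Matrix (Fin n) (Fin n) ℝ, X.PosSemidef → (∀ i, X i i = 1) →
      Matrix.trace (A * X) = Matrix.trace (A * vecMulVec z z) → X = vecMulVec z z) := by
  have hzz : ∀ i, z i * z i = 1 := by
    intro i; rcases hz i with h | h <;> rw [h] <;> ring
  -- key identity: for X with unit diagonal, trace(S X) = trace(A zzᵀ) − trace(A X)
  have hkey : ∀ X : Matrix (Fin n) (Fin n) ℝ, (∀ i, X i i = 1) →
      Matrix.trace (S * X) = Matrix.trace (A * vecMulVec z z) - Matrix.trace (A * X) := by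
    intro X hX1
    rw [hSdef, Matrix.sub_mul, Matrix.trace_sub]
    have : Matrix.trace (ddiag (A * vecMulVec z z) * X) = Matrix.trace (A * vecMulVec z z) := by
      simp [ddiag, Matrix.trace, Matrix.diag, Matrix.diagonal_mul, hX1]
    rw [this]
  constructor
  · intro X hXpsd hX1
    have h1 := (psd_trace_mul' S X hpsd hXpsd).1
    have h2 := hkey X hX1
    linarith
  · intro X hXpsd hX1 heq
    have h0 : Matrix.trace (S * X) = 0 := by rw [hkey X hX1, heq]; ring
    have hSX : S * X = 0 := (psd_trace_mul' S X hpsd hXpsd).2 h0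
    -- each column of X is in the kernel of S
    have hcol : ∀ j, S.mulVec (fun i => X i j) = 0 := by
      intro j
      funext i
      have := congrFun (congrFun hSX i) j
      simpa [Matrix.mulVec, Matrix.mul_apply, dotProduct] using this
    choose t ht using fun j => hker _ (hcol j)
    have hXij : ∀ i j, X i j = t j * z i := by
      intro i j
      have := congrFun (ht j) i
      simpa using this
    have htz : ∀ i, t i = z i := by
      intro i
      have h1 : t i * z i = 1 := by rw [← hXij i i]; exact hX1 i
      have := congrArg (· * z i) h1
      simpa [mul_assoc, hzz i] using this
    ext i j
    rw [hXij i j, htz j]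
    simp [Matrix.vecMulVec_apply]
    ring
end

section
/- Let A be a symmetric n×n matrix with nonnegative diagonal, and Q = [x, y] ∈ ℝ^{n×2} with unit-norm rows satisfying the first-order condition (ddiag(AQQᵀ) − A)Q = 0 and the second-order condition ddiag(AQQᵀ) − A∘(QQᵀ) ⪰ 0. Then for every i, (AQQᵀ)_{ii} = ⟨A_i, x⟩x_i + ⟨A_i, y⟩y_i = √(⟨A_i,x⟩² + ⟨A_i,y⟩²), where A_i is the i-th row of A. -/
open Matrix BigOperators

/-- At first- and second-order critical points, with diag(A) ≥ 0,
the diagonal of AQQᵀ equals the row norms of AQ. -/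
theorem stmt10 {n : ℕ} (A : Matrix (Fin n) (Fin n) ℝ) (hA : A.IsSymm)
    (hdiagA : ∀ i, 0 ≤ A i i)
    (Q : Matrix (Fin n) (Fin 2) ℝ) (hrows : ∀ i, (Q i 0) ^ 2 + (Q i 1) ^ 2 = 1)
    (hfo : (ddiag (A * Q * Qᵀ) - A) * Q = 0)
    (hso : (ddiag (A * Q * Qᵀ) - A.hadamard (Q * Qᵀ)).PosSemidef) :
    ∀ i, (A * Q * Qᵀ) i i
        = A.mulVec (fun k => Q k 0) i * Q i 0 + A.mulVec (fun k => Q k 1) i * Q i 1 ∧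
      (A * Q * Qᵀ) i i
        = Real.sqrt ((A.mulVec (fun k => Q k 0) i) ^ 2 + (A.mulVec (fun k => Q k 1) i) ^ 2) := by
  intro i
  set d := (A * Q * Qᵀ) i i with hd
  set a := A.mulVec (fun k => Q k 0) i with ha
  set b := A.mulVec (fun k => Q k 1) i with hb
  set u := Q i 0 with hu
  set v := Q i 1 with hv
  -- d = a*u + b*v
  have hAQ : ∀ j, (A * Q) i j = A.mulVec (fun k => Q k j) i := by
    intro j
    simp [Matrix.mul_apply, Matrix.mulVec, dotProduct]
  have h1 : d = a * u + b * v := by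
    rw [hd, Matrix.mul_apply]
    rw [Fin.sum_univ_two]
    simp [Matrix.transpose_apply, hAQ, ha, hb, hu, hv]
  -- first order: a = d*u, b = d*v
  have hfo' : ∀ j, d * Q i j = A.mulVec (fun k => Q k j) i := by
    intro j
    have := congrFun (congrFun hfo i) j
    simp only [Matrix.sub_mul, Matrix.sub_apply, Matrix.zero_apply, ddiag,
      Matrix.diagonal_mul, hAQ] at this
    linarith [this]
  have hau : a = d * u := (hfo' 0).symm
  have hbv : b = d * v := (hfo' 1).symm
  -- second order: d ≥ A i i ≥ 0
  have hdnn : 0 ≤ d := by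
    have h2 := hso.dotProduct_mulVec_nonneg (Pi.single i 1)
    have hdiag : ((ddiag (A * Q * Qᵀ) - A.hadamard (Q * Qᵀ))) i i
        = d - A i i := by
      have hQQ : (Q * Qᵀ) i i = 1 := by
        rw [Matrix.mul_apply, Fin.sum_univ_two]
        have := hrows i
        simp only [Matrix.transpose_apply]
        nlinarith [hrows i]
      simp [ddiag, Matrix.sub_apply, Matrix.hadamard_apply, hQQ, hd]
    have hval : (Pi.single i 1 : Fin n → ℝ) ⬝ᵥ
        (ddiag (A * Q * Qᵀ) - A.hadamard (Q * Qᵀ)).mulVec (Pi.single i 1)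
        = ((ddiag (A * Q * Qᵀ) - A.hadamard (Q * Qᵀ))) i i := by
      rw [Matrix.mulVec_single, single_dotProduct]
      simp
    rw [show (star (Pi.single i 1 : Fin n → ℝ)) = Pi.single i 1 from star_trivial _, hval, hdiag] at h2
    have := hdiagA i
    linarith
  refine ⟨h1, ?_⟩
  have : a ^ 2 + b ^ 2 = d ^ 2 := by
    rw [hau, hbv]
    have := hrows i
    nlinarith
  rw [this, Real.sqrt_sq hdnn]
end

section
/- Let Δ be a symmetric n×n matrix with ‖Δ‖ ≤ γ√n and ‖Δ𝟙‖_∞ ≤ γ√(n log n). Let Q ∈ ℝ^{n×2} with ‖Q‖_F² = n and ‖Qᵀ𝟙‖₂ ≥ n(1 − 8γc). Then for every i, ‖e_iᵀΔQ‖₂ ≤ γ√n(√(log n) + 4√(γcn)). -/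
open Matrix BigOperators

-- Cauchy-Schwarz sqrt form
lemma cs {ι : Type*} [Fintype ι] (f g : ι → ℝ) :
    |∑ i, f i * g i| ≤ Real.sqrt (∑ i, f i ^ 2) * Real.sqrt (∑ i, g i ^ 2) := by
  have h := Finset.sum_mul_sq_le_sq_mul_sq Finset.univ f g
  have h2 : |∑ i, f i * g i| = Real.sqrt ((∑ i, f i * g i) ^ 2) := (Real.sqrt_sq_eq_abs _).symm
  rw [h2, ← Real.sqrt_mul (by positivity)]
  exact Real.sqrt_le_sqrt h

lemma l2tri {ι : Type*} [Fintype ι] (a b : ι → ℝ) :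
    Real.sqrt (∑ i, (a i + b i) ^ 2) ≤ Real.sqrt (∑ i, a i ^ 2) + Real.sqrt (∑ i, b i ^ 2) := by
  have hA : (∑ i, a i ^ 2) = Real.sqrt (∑ i, a i ^ 2) ^ 2 := (Real.sq_sqrt (by positivity)).symm
  have hB : (∑ i, b i ^ 2) = Real.sqrt (∑ i, b i ^ 2) ^ 2 := (Real.sq_sqrt (by positivity)).symm
  have hab : ∑ i, a i * b i ≤ Real.sqrt (∑ i, a i ^ 2) * Real.sqrt (∑ i, b i ^ 2) :=
    le_trans (le_abs_self _) (cs a b)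
  have : ∑ i, (a i + b i) ^ 2 ≤ (Real.sqrt (∑ i, a i ^ 2) + Real.sqrt (∑ i, b i ^ 2)) ^ 2 := by
    have expand : ∑ i, (a i + b i) ^ 2 = ∑ i, a i ^ 2 + 2 * ∑ i, a i * b i + ∑ i, b i ^ 2 := by
      rw [Finset.mul_sum, ← Finset.sum_add_distrib, ← Finset.sum_add_distrib]
      exact Finset.sum_congr rfl fun i _ => by ring
    rw [expand]; nlinarith [hab]
  calc Real.sqrt (∑ i, (a i + b i) ^ 2) ≤ Real.sqrt ((Real.sqrt (∑ i, a i ^ 2) + Real.sqrt (∑ i, b i ^ 2)) ^ 2) := Real.sqrt_le_sqrt this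
    _ = _ := Real.sqrt_sq (by positivity)

lemma colbound {n : ℕ} (Δ : Matrix (Fin n) (Fin n) ℝ) (i : Fin n) :
    Real.sqrt (∑ j, (Δ j i) ^ 2) ≤ opNorm Δ := by
  set v : EuclideanSpace ℝ (Fin n) := (WithLp.equiv 2 (Fin n → ℝ)).symm (Pi.single i 1)
  have hv : ‖v‖ = 1 := by
    rw [EuclideanSpace.norm_eq]
    have : ∀ j, ‖(WithLp.equiv 2 (Fin n → ℝ)).symm (Pi.single i 1) j‖ ^ 2 = if j = i then (1:ℝ) else 0 := by
      intro j
      by_cases h : j = i <;> simp [v, h, Pi.single_apply]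
    simp only [v, this, Finset.sum_ite_eq', Finset.mem_univ, if_pos]
    exact Real.sqrt_one
  have h1 : ‖(Matrix.toEuclideanLin Δ).toContinuousLinearMap v‖ ≤ opNorm Δ * ‖v‖ :=
    ContinuousLinearMap.le_opNorm _ _
  rw [hv, mul_one] at h1
  have h2 : (Matrix.toEuclideanLin Δ).toContinuousLinearMap v = Matrix.toEuclideanLin Δ v := rfl
  rw [h2] at h1
  change ‖(WithLp.equiv 2 (Fin n → ℝ)).symm (Δ *ᵥ Pi.single i 1)‖ ≤ opNorm Δ at h1
  have h3 : Δ *ᵥ Pi.single i 1 = fun j => Δ j i := by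
    ext j; rw [Matrix.mulVec_single]; simp
  rw [h3] at h1
  refine le_trans (le_of_eq ?_) h1
  rw [EuclideanSpace.norm_eq]
  congr 1
  refine Finset.sum_congr rfl fun j _ => ?_
  rw [Real.norm_eq_abs, sq_abs]
  rfl

/-- Bound on the largest row of ΔQ at well-correlated points. -/
theorem stmt12 {n : ℕ} (Δ : Matrix (Fin n) (Fin n) ℝ) (hΔ : Δ.IsSymm)
    (γ c : ℝ) (hγ : 0 ≤ γ) (hc : 0 ≤ c)
    (hop : opNorm Δ ≤ γ * Real.sqrt n)
    (hinf : ∀ i, |∑ j, Δ i j| ≤ γ * Real.sqrt ((n : ℝ) * Real.log n))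
    (Q : Matrix (Fin n) (Fin 2) ℝ) (hQ : ∑ i, ∑ j, (Q i j) ^ 2 = (n : ℝ))
    (hcorr : (n : ℝ) * (1 - 8 * γ * c) ≤ Real.sqrt (∑ j, (∑ i, Q i j) ^ 2)) :
    ∀ i, Real.sqrt (∑ j, ((Δ * Q) i j) ^ 2)
      ≤ γ * Real.sqrt n * (Real.sqrt (Real.log n) + 4 * Real.sqrt (γ * c * n)) := by
  intro i
  have hn : (0 : ℝ) < n := by
    have : 0 < n := Fin.pos i
    exact_mod_cast this
  set d : ℝ := ∑ k, Δ i k with hd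
  set s : Fin 2 → ℝ := fun j => ∑ k, Q k j with hs
  set S : ℝ := ∑ j, s j ^ 2 with hS
  have hS0 : 0 ≤ S := by positivity
  set a : Fin 2 → ℝ := fun j => d * s j / n with ha
  set b : Fin 2 → ℝ := fun j => ∑ k, Δ i k * (Q k j - s j / n) with hb
  -- decomposition
  have hdec : ∀ j, (Δ * Q) i j = a j + b j := by
    intro j
    have : (Δ * Q) i j = ∑ k, Δ i k * Q k j := by
      simp [Matrix.mul_apply]
    rw [this, ha, hb]
    have h1 : ∑ k, Δ i k * (Q k j - s j / n) = (∑ k, Δ i k * Q k j) - d * (s j / n) := by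
      rw [hd, Finset.sum_mul]
      rw [← Finset.sum_sub_distrib]
      exact Finset.sum_congr rfl fun k _ => by ring
    simp only [h1]; ring
  -- sum bound via triangle
  have htri : Real.sqrt (∑ j, ((Δ * Q) i j) ^ 2)
      ≤ Real.sqrt (∑ j, a j ^ 2) + Real.sqrt (∑ j, b j ^ 2) := by
    have : (∑ j, ((Δ * Q) i j) ^ 2) = ∑ j, (a j + b j) ^ 2 := by
      exact Finset.sum_congr rfl fun j _ => by rw [hdec j]
    rw [this]; exact l2tri a b
  -- S ≤ n^2
  have hSn : S ≤ (n : ℝ) ^ 2 := by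
    have hj : ∀ j, s j ^ 2 ≤ (∑ k, Q k j ^ 2) * n := by
      intro j
      have h := Finset.sum_mul_sq_le_sq_mul_sq Finset.univ (fun k => Q k j) (fun _ => (1:ℝ))
      simpa [hs] using h
    have : S ≤ ∑ j, (∑ k, Q k j ^ 2) * n := Finset.sum_le_sum fun j _ => hj j
    calc S ≤ ∑ j, (∑ k, Q k j ^ 2) * n := this
      _ = (∑ j, ∑ k, Q k j ^ 2) * n := by rw [Finset.sum_mul]
      _ = (n : ℝ) * n := by rw [Finset.sum_comm, hQ]
      _ = (n : ℝ) ^ 2 := by ring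
  have hsqrtS : Real.sqrt S ≤ n := by
    have := Real.sqrt_le_sqrt hSn
    rwa [Real.sqrt_sq hn.le] at this
  -- term 1
  have hterm1 : Real.sqrt (∑ j, a j ^ 2) ≤ γ * Real.sqrt ((n : ℝ) * Real.log n) := by
    have h1 : (∑ j, a j ^ 2) = (d / n) ^ 2 * S := by
      rw [hS, Finset.mul_sum]
      exact Finset.sum_congr rfl fun j _ => by rw [ha]; ring
    rw [h1, Real.sqrt_mul (sq_nonneg _), Real.sqrt_sq_eq_abs, abs_div,
      abs_of_nonneg hn.le]
    calc |d| / n * Real.sqrt S ≤ (γ * Real.sqrt ((n:ℝ) * Real.log n)) / n * n := by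
          apply mul_le_mul (div_le_div_of_nonneg_right (hinf i) hn.le) hsqrtS (Real.sqrt_nonneg _)
          positivity
      _ = γ * Real.sqrt ((n : ℝ) * Real.log n) := by field_simp
  -- Frobenius residual
  set Fr : ℝ := ∑ j, ∑ k, (Q k j - s j / n) ^ 2 with hFr
  have hFrval : Fr = (n : ℝ) - S / n := by
    have hj : ∀ j, (∑ k, (Q k j - s j / n) ^ 2) = (∑ k, Q k j ^ 2) - s j ^ 2 / n := by
      intro j
      have e1 : ∀ k, (Q k j - s j / n) ^ 2
          = Q k j ^ 2 - (2 * (s j / n)) * Q k j + (s j / n) ^ 2 := fun k => by ring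
      calc ∑ k, (Q k j - s j / n) ^ 2
          = ∑ k, (Q k j ^ 2 - (2 * (s j / n)) * Q k j + (s j / n) ^ 2) :=
            Finset.sum_congr rfl fun k _ => e1 k
        _ = (∑ k, Q k j ^ 2) - (2 * (s j / n)) * (∑ k, Q k j) + (n : ℝ) * (s j / n) ^ 2 := by
            rw [Finset.sum_add_distrib, Finset.sum_sub_distrib, ← Finset.mul_sum,
              Finset.sum_const, nsmul_eq_mul, Finset.card_univ, Fintype.card_fin]
        _ = (∑ k, Q k j ^ 2) - s j ^ 2 / n := by
            have hsj : (∑ k : Fin n, Q k j) = s j := rfl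
            rw [hsj]; field_simp; ring
    rw [hFr]
    calc (∑ j, ∑ k, (Q k j - s j / n) ^ 2) = ∑ j, ((∑ k, Q k j ^ 2) - s j ^ 2 / n) :=
          Finset.sum_congr rfl fun j _ => hj j
      _ = (∑ j, ∑ k, Q k j ^ 2) - (∑ j, s j ^ 2 / n) := by rw [Finset.sum_sub_distrib]
      _ = (n : ℝ) - S / n := by
          rw [Finset.sum_comm, hQ, ← Finset.sum_div, ← hS]
  have hFr0 : 0 ≤ Fr := by rw [hFr]; positivity
  have hFrle : Fr ≤ 16 * (γ * c * n) := by
    rw [hFrval]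
    rcases le_or_gt (1 - 8 * γ * c) 0 with hcase | hcase
    · have hSdiv : 0 ≤ S / n := by positivity
      nlinarith
    · have h1 : (n : ℝ) * (1 - 8 * γ * c) ≤ Real.sqrt S := hcorr
      have hA0 : 0 ≤ (n : ℝ) * (1 - 8 * γ * c) := mul_nonneg hn.le hcase.le
      have h2 : ((n : ℝ) * (1 - 8 * γ * c)) ^ 2 ≤ S := by
        have := pow_le_pow_left₀ hA0 h1 2
        rwa [Real.sq_sqrt hS0] at this
      have h3 : ((n:ℝ) * (1 - 8 * γ * c)) ^ 2 / n ≤ S / n :=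
        div_le_div_of_nonneg_right h2 hn.le
      have h4 : ((n:ℝ) * (1 - 8 * γ * c)) ^ 2 / n = n * (1 - 8*γ*c)^2 := by
        field_simp
      rw [h4] at h3
      nlinarith [sq_nonneg (γ * c), hn.le, mul_nonneg hγ hc]
  -- term 2
  have hD : Real.sqrt (∑ k, Δ i k ^ 2) ≤ γ * Real.sqrt n := by
    have hsym : ∀ k, Δ i k = Δ k i := fun k => Matrix.IsSymm.apply hΔ k i
    have : (∑ k, Δ i k ^ 2) = ∑ k, Δ k i ^ 2 :=
      Finset.sum_congr rfl fun k _ => by rw [hsym k]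
    rw [this]
    exact le_trans (colbound Δ i) hop
  have hterm2 : Real.sqrt (∑ j, b j ^ 2) ≤ (γ * Real.sqrt n) * (4 * Real.sqrt (γ * c * n)) := by
    set D : ℝ := ∑ k, Δ i k ^ 2 with hDdef
    have hD0 : 0 ≤ D := by positivity
    have hbj : ∀ j, b j ^ 2 ≤ D * (∑ k, (Q k j - s j / n) ^ 2) := by
      intro j
      have h := Finset.sum_mul_sq_le_sq_mul_sq Finset.univ (fun k => Δ i k)
        (fun k => Q k j - s j / n)
      simpa [hb, hDdef] using h
    have hsum : (∑ j, b j ^ 2) ≤ D * Fr := by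
      rw [hFr, Finset.mul_sum]
      exact Finset.sum_le_sum fun j _ => hbj j
    have h1 : Real.sqrt (∑ j, b j ^ 2) ≤ Real.sqrt (D * Fr) := Real.sqrt_le_sqrt hsum
    rw [Real.sqrt_mul hD0] at h1
    have h2 : Real.sqrt Fr ≤ 4 * Real.sqrt (γ * c * n) := by
      have := Real.sqrt_le_sqrt hFrle
      rwa [Real.sqrt_mul (by norm_num : (0:ℝ) ≤ 16),
        show Real.sqrt 16 = 4 by rw [show (16:ℝ) = 4^2 by norm_num, Real.sqrt_sq]; norm_num] at this
    calc Real.sqrt (∑ j, b j ^ 2) ≤ Real.sqrt D * Real.sqrt Fr := h1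
      _ ≤ (γ * Real.sqrt n) * (4 * Real.sqrt (γ * c * n)) := by
          apply mul_le_mul hD h2 (Real.sqrt_nonneg _) (by positivity)
  -- combine
  calc Real.sqrt (∑ j, ((Δ * Q) i j) ^ 2)
      ≤ Real.sqrt (∑ j, a j ^ 2) + Real.sqrt (∑ j, b j ^ 2) := htri
    _ ≤ γ * Real.sqrt ((n : ℝ) * Real.log n) + (γ * Real.sqrt n) * (4 * Real.sqrt (γ * c * n)) :=
        add_le_add hterm1 hterm2
    _ = γ * Real.sqrt n * (Real.sqrt (Real.log n) + 4 * Real.sqrt (γ * c * n)) := by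
        rw [Real.sqrt_mul hn.le]; ring
end

section
/- Let A be a symmetric n×n matrix, z ∈ {±1}ⁿ, Δ symmetric with A = zzᵀ + σΔ, and Q ∈ ℝ^{n×2} satisfying (ddiag(AQQᵀ) − A)Q = 0. Then rank(Q) ≤ n + 1 − rank(ddiag(AQQᵀ) − σΔ). In particular, if the diagonal matrix D = ddiag(AQQᵀ) satisfies min_i D_{ii} > σ‖Δ‖, then rank(Q) = 1. -/
open Matrix BigOperators

lemma aux_rank_add_le {n : ℕ} (M N : Matrix (Fin n) (Fin n) ℝ) :
    (M + N).rank ≤ M.rank + N.rank := by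
  classical
  have h : LinearMap.range (M + N).mulVecLin ≤
      LinearMap.range M.mulVecLin ⊔ LinearMap.range N.mulVecLin := by
    rintro x ⟨y, rfl⟩
    have : (M + N).mulVecLin y = M.mulVecLin y + N.mulVecLin y := by
      simp [Matrix.mulVecLin_apply, Matrix.add_mulVec]
    rw [this]
    exact Submodule.add_mem_sup (LinearMap.mem_range_self _ _) (LinearMap.mem_range_self _ _)
  calc (M + N).rank ≤ Module.finrank ℝ
        ↥(LinearMap.range M.mulVecLin ⊔ LinearMap.range N.mulVecLin) :=
        Submodule.finrank_mono h
    _ ≤ M.rank + N.rank := Submodule.finrank_add_le_finrank_add_finrank _ _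

lemma aux_rank_vecMulVec {n : ℕ} (z : Fin n → ℝ) : (vecMulVec z z).rank ≤ 1 := by
  rw [Matrix.vecMulVec_eq Unit]
  refine le_trans (Matrix.rank_mul_le_left _ _) (le_trans (Matrix.rank_le_card_width _) ?_)
  simp

lemma aux_quad {n : ℕ} (Δ : Matrix (Fin n) (Fin n) ℝ) (x : Fin n → ℝ) :
    x ⬝ᵥ Δ *ᵥ x ≤ opNorm Δ * ∑ i, x i * x i := by
  set T := (Matrix.toEuclideanLin Δ).toContinuousLinearMap with hT
  set y : EuclideanSpace ℝ (Fin n) := (WithLp.equiv 2 (Fin n → ℝ)).symm x with hy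
  have hTy : ∀ i, T y i = (Δ *ᵥ x) i := by
    intro i
    simp [hT, hy, Matrix.toEuclideanLin_apply_piLp_toLp]
  have h1 : x ⬝ᵥ Δ *ᵥ x = inner ℝ y (T y) := by
    rw [PiLp.inner_apply]
    simp only [hTy]
    simp [dotProduct, hy, mul_comm]
  have h2 : (inner ℝ y y : ℝ) = ∑ i, x i * x i := by
    rw [PiLp.inner_apply]; simp [hy, sq]
  calc x ⬝ᵥ Δ *ᵥ x = inner ℝ y (T y) := h1
    _ ≤ ‖y‖ * ‖T y‖ := real_inner_le_norm _ _
    _ ≤ ‖y‖ * (‖T‖ * ‖y‖) := by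
        refine mul_le_mul_of_nonneg_left (T.le_opNorm y) (norm_nonneg _)
    _ = ‖T‖ * (‖y‖ * ‖y‖) := by ring
    _ = opNorm Δ * ∑ i, x i * x i := by
        rw [← h2, ← real_inner_self_eq_norm_mul_norm]; rfl


/-- Rank control: rank(Q) + rank(ddiag(AQQᵀ) − σΔ) ≤ n + 1; and if the diagonal
dominates σ‖Δ‖ then rank(Q) = 1. -/
theorem stmt13 {n : ℕ} (hn : 0 < n)
    (A Δ : Matrix (Fin n) (Fin n) ℝ) (hA : A.IsSymm) (hΔ : Δ.IsSymm)
    (z : Fin n → ℝ) (hz : ∀ i, z i = 1 ∨ z i = -1)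
    (σ : ℝ) (hσ : 0 ≤ σ)
    (hAdef : A = vecMulVec z z + σ • Δ)
    (Q : Matrix (Fin n) (Fin 2) ℝ) (hrows : ∀ i, (Q i 0) ^ 2 + (Q i 1) ^ 2 = 1)
    (hfo : (ddiag (A * Q * Qᵀ) - A) * Q = 0) :
    Q.rank + (ddiag (A * Q * Qᵀ) - σ • Δ).rank ≤ n + 1 ∧
    ((∀ i, σ * opNorm Δ < (A * Q * Qᵀ) i i) → Q.rank = 1) := by
  classical
  set D := ddiag (A * Q * Qᵀ) with hD
  set B := D - A with hB
  set C := D - σ • Δ with hC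
  -- rank Q + rank B ≤ n
  have hcomp : B.mulVecLin ∘ₗ Q.mulVecLin = 0 := by
    rw [← Matrix.mulVecLin_mul, hfo, Matrix.mulVecLin_zero]
  have hrange : LinearMap.range Q.mulVecLin ≤ LinearMap.ker B.mulVecLin :=
    LinearMap.range_le_ker_iff.mpr hcomp
  have hrn : B.rank + Module.finrank ℝ (LinearMap.ker B.mulVecLin) = n := by
    have := LinearMap.finrank_range_add_finrank_ker B.mulVecLin
    simpa [Matrix.rank] using this
  have hQB : Q.rank + B.rank ≤ n := by
    have h1 : Q.rank ≤ Module.finrank ℝ (LinearMap.ker B.mulVecLin) :=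
      Submodule.finrank_mono hrange
    omega
  -- C = B + zzᵀ
  have hCB : C = B + vecMulVec z z := by
    rw [hC, hB, hAdef]; abel
  have hCrank : C.rank ≤ B.rank + 1 := by
    rw [hCB]
    exact le_trans (aux_rank_add_le _ _) (by
      have := aux_rank_vecMulVec z; omega)
  constructor
  · omega
  · intro hmin
    -- C has full rank
    have hpos : ∀ x : Fin n → ℝ, x ≠ 0 → 0 < x ⬝ᵥ C *ᵥ x := by
      intro x hx
      have hCx : x ⬝ᵥ C *ᵥ x
          = (∑ i, (A * Q * Qᵀ) i i * (x i * x i)) - σ * (x ⬝ᵥ Δ *ᵥ x) := by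
        rw [hC, Matrix.sub_mulVec]
        simp only [dotProduct_sub]
        congr 1
        · simp [hD, ddiag, dotProduct, Matrix.mulVec_diagonal]
          ring_nf
          exact Finset.sum_congr rfl fun i _ => by ring
        · rw [Matrix.smul_mulVec, dotProduct_smul]
          simp [smul_eq_mul]
      have hquad : σ * (x ⬝ᵥ Δ *ᵥ x) ≤ σ * opNorm Δ * ∑ i, x i * x i := by
        rw [mul_assoc]
        exact mul_le_mul_of_nonneg_left (aux_quad Δ x) hσ
      have hsum : σ * opNorm Δ * ∑ i, x i * x i
          < ∑ i, (A * Q * Qᵀ) i i * (x i * x i) := by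
        rw [Finset.mul_sum]
        obtain ⟨i0, hi0⟩ : ∃ i, x i ≠ 0 := by
          by_contra h; push_neg at h; exact hx (funext h)
        apply Finset.sum_lt_sum
        · intro i _
          have h1 : 0 ≤ x i * x i := mul_self_nonneg _
          exact mul_le_mul_of_nonneg_right (le_of_lt (hmin i)) h1
        · exact ⟨i0, Finset.mem_univ _, by
            have : 0 < x i0 * x i0 := mul_self_pos.mpr hi0
            exact mul_lt_mul_of_pos_right (hmin i0) this⟩
      rw [hCx]; linarith
    have hinj : LinearMap.ker C.mulVecLin = ⊥ := by
      rw [LinearMap.ker_eq_bot']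
      intro x hx0
      by_contra hx
      have := hpos x hx
      rw [Matrix.mulVecLin_apply] at hx0
      rw [hx0, dotProduct_zero] at this
      exact lt_irrefl 0 this
    have hCn : C.rank = n := by
      have := LinearMap.finrank_range_add_finrank_ker C.mulVecLin
      rw [hinj] at this
      simpa [Matrix.rank] using this
    have hQle : Q.rank ≤ 1 := by omega
    have hQne : Q.rank ≠ 0 := by
      intro h0
      have hbot : LinearMap.range Q.mulVecLin = ⊥ :=
        Submodule.finrank_eq_zero.mp h0
      set i0 : Fin n := ⟨0, hn⟩
      have hmem : Q.mulVecLin (fun j => Q i0 j) ∈ LinearMap.range Q.mulVecLin :=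
        LinearMap.mem_range_self _ _
      rw [hbot, Submodule.mem_bot] at hmem
      have := congrFun hmem i0
      have h1 : Q.mulVecLin (fun j => Q i0 j) i0 = 1 := by
        rw [Matrix.mulVecLin_apply]
        simp [Matrix.mulVec, dotProduct, Fin.sum_univ_two]
        have := hrows i0
        nlinarith [hrows i0]
      rw [hmem] at h1
      simp at h1
    omega
end

section
/- Let z ∈ {±1}ⁿ, A = zzᵀ + σΔ with σ = c√n, Δ symmetric, SDP(Δ)/n ≤ γ√n and ‖Δ‖ ≤ γ√n, for γ, c ≥ 0 with 8γc ≤ 1. If Q ∈ ℝ^{n×2} has unit-norm rows and satisfies both the first-order condition (ddiag(AQQᵀ) − A)Q = 0 and the second-order condition ddiag(AQQᵀ) − A∘(QQᵀ) ⪰ 0, then ‖Qᵀz‖₂/n ≥ 1 − 8γc. -/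
open Matrix BigOperators

private lemma dsum6 {n : ℕ} (σ : ℝ) (t1 t2 t3 t4 t5 t6 : Fin n → Fin n → ℝ) :
    ∑ i, ∑ j, (t1 i j + 2 * t2 i j + t3 i j + σ * (t4 i j + 2 * t5 i j + t6 i j))
      = (∑ i, ∑ j, t1 i j) + 2 * (∑ i, ∑ j, t2 i j) + (∑ i, ∑ j, t3 i j)
        + σ * ((∑ i, ∑ j, t4 i j) + 2 * (∑ i, ∑ j, t5 i j) + ∑ i, ∑ j, t6 i j) := by
  simp only [Finset.sum_add_distrib, ← Finset.mul_sum]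

set_option maxHeartbeats 4000000 in
private lemma corrTail (a b e α β γ c S : ℝ) (nr : ℝ) (hn' : (0:ℝ) < nr) (hγ : 0 ≤ γ) (hc : 0 ≤ c)
    (h8 : 8 * γ * c ≤ 1)
    (hab : a + b = nr) (hB : S ≤ (γ * c) ^ 2 * nr ^ 3)
    (hLHS : S = α ^ 2 * b + β ^ 2 * a - 2 * (α * β) * e)
    (hCSx : e ^ 2 ≤ a * b)
    (hC : a ^ 2 + 2 * e ^ 2 + b ^ 2 - 2 * (γ * c) * (nr * nr) ≤ α ^ 2 + β ^ 2) :
    nr * (1 - 8 * (γ * c)) ≤ Real.sqrt (α ^ 2 + β ^ 2) := by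
  have hn0 : (0:ℝ) ≤ nr := le_of_lt hn'
  -- spectral argument for the 2x2 Gram matrix
  have hCS : e ^ 2 ≤ a * b := by
    nlinarith [hCSx]
  set r := Real.sqrt ((a - b) ^ 2 + 4 * e ^ 2) with hrd
  have hr0 : 0 ≤ r := Real.sqrt_nonneg _
  have hr2 : r ^ 2 = (a - b) ^ 2 + 4 * e ^ 2 := Real.sq_sqrt (by positivity)
  have hrab : |a - b| ≤ r := by
    rw [hrd, ← Real.sqrt_sq_eq_abs]
    exact Real.sqrt_le_sqrt (by nlinarith [sq_nonneg e])
  have hrn : r ≤ nr := by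
    rw [hrd]
    calc Real.sqrt ((a - b) ^ 2 + 4 * e ^ 2) ≤ Real.sqrt (nr ^ 2) :=
          Real.sqrt_le_sqrt (by nlinarith [hCS, hab])
      _ = nr := Real.sqrt_sq hn0
  have hp0 : 0 ≤ (b - a + r) / 2 := by
    have := (abs_le.mp hrab).2; linarith
  have hq0 : 0 ≤ (a - b + r) / 2 := by
    have := (abs_le.mp hrab).1; linarith
  have hpq : ((b - a + r) / 2) * ((a - b + r) / 2) = e ^ 2 := by
    linear_combination (1 / 4 : ℝ) * hr2
  have hgeq : 0 ≤ α ^ 2 * ((b - a + r) / 2) + β ^ 2 * ((a - b + r) / 2) - 2 * (α * β) * e := by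
    rcases eq_or_lt_of_le hp0 with hp | hp
    · have he2 : e ^ 2 = 0 := by rw [← hpq, ← hp]; ring
      have he0 : e = 0 := by
        have := sq_nonneg e; nlinarith
      have hz' : 2 * (α * β) * e = 0 := by rw [he0]; ring
      have h1 : 0 ≤ α ^ 2 * ((b - a + r) / 2) := mul_nonneg (sq_nonneg α) hp0
      have h2 : 0 ≤ β ^ 2 * ((a - b + r) / 2) := mul_nonneg (sq_nonneg β) hq0
      linarith
    · nlinarith [sq_nonneg (α * ((b - a + r) / 2) - β * e), hpq, hp, sq_nonneg β, hq0]
  have hD1 : (α ^ 2 + β ^ 2) * ((nr - r) / 2) ≤ (γ * c) ^ 2 * nr ^ 3 := by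
    have hexpand : α ^ 2 * b + β ^ 2 * a - 2 * (α * β) * e
        - (α ^ 2 + β ^ 2) * ((a + b - r) / 2)
        = α ^ 2 * ((b - a + r) / 2) + β ^ 2 * ((a - b + r) / 2) - 2 * (α * β) * e := by ring
    have h1 : (α ^ 2 + β ^ 2) * ((a + b - r) / 2) ≤ α ^ 2 * b + β ^ 2 * a - 2 * (α * β) * e := by
      linarith
    rw [hab] at h1
    linarith [hB, hLHS, h1]
  have hd0 : 0 ≤ a * b - e ^ 2 := by linarith
  have hd4 : 4 * (a * b - e ^ 2) ≤ nr ^ 2 := by nlinarith [sq_nonneg (a - b), sq_nonneg e, hab]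
  have hdlm : a * b - e ^ 2 ≤ nr * ((nr - r) / 2) := by
    have hprod : ((nr - r) / 2) * ((nr + r) / 2) = a * b - e ^ 2 := by
      linear_combination (-(1 : ℝ) / 4) * hr2 - ((nr + a + b) / 4) * hab
    nlinarith [hprod, sq_nonneg (nr - r)]
  have hs0 : (0 : ℝ) ≤ α ^ 2 + β ^ 2 := by positivity
  have hsd : (α ^ 2 + β ^ 2) * (a * b - e ^ 2) ≤ (γ * c) ^ 2 * nr ^ 4 := by
    calc (α ^ 2 + β ^ 2) * (a * b - e ^ 2)
        ≤ (α ^ 2 + β ^ 2) * (nr * ((nr - r) / 2)) :=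
          mul_le_mul_of_nonneg_left hdlm hs0
      _ = nr * ((α ^ 2 + β ^ 2) * ((nr - r) / 2)) := by ring
      _ ≤ nr * ((γ * c) ^ 2 * nr ^ 3) := mul_le_mul_of_nonneg_left hD1 hn0
      _ = (γ * c) ^ 2 * nr ^ 4 := by ring
  have hC2 : nr ^ 2 - 2 * (a * b - e ^ 2) - 2 * (γ * c) * nr ^ 2 ≤ α ^ 2 + β ^ 2 := by
    have hsq : a ^ 2 + 2 * e ^ 2 + b ^ 2 = nr ^ 2 - 2 * (a * b - e ^ 2) := by
      linear_combination (a + b + nr) * hab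
    nlinarith [hC]
  have ht0 : 0 ≤ γ * c := mul_nonneg hγ hc
  have ht8 : 8 * (γ * c) ≤ 1 := by linarith [h8]
  have hq4 : nr ^ 2 / 4 ≤ α ^ 2 + β ^ 2 := by
    nlinarith [hC2, hd4, mul_nonneg (by linarith : (0 : ℝ) ≤ 1 - 8 * (γ * c)) (sq_nonneg nr)]
  have hd' : a * b - e ^ 2 ≤ 4 * (γ * c) ^ 2 * nr ^ 2 := by
    have h1 : (nr ^ 2 / 4) * (a * b - e ^ 2) ≤ (α ^ 2 + β ^ 2) * (a * b - e ^ 2) :=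
      mul_le_mul_of_nonneg_right hq4 hd0
    have hn2 : (0 : ℝ) < nr ^ 2 := by positivity
    nlinarith [h1, hsd]
  have hfin : (nr * (1 - 8 * (γ * c))) ^ 2 ≤ α ^ 2 + β ^ 2 := by
    nlinarith [hC2, hd',
      mul_nonneg (mul_nonneg ht0 (by linarith : (0 : ℝ) ≤ 7 - 36 * (γ * c))) (sq_nonneg nr)]
  have hge : nr * (1 - 8 * (γ * c)) ≤ Real.sqrt (α ^ 2 + β ^ 2) := by
    have h0 : 0 ≤ nr * (1 - 8 * (γ * c)) := mul_nonneg hn0 (by linarith)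
    calc nr * (1 - 8 * (γ * c)) = Real.sqrt ((nr * (1 - 8 * (γ * c))) ^ 2) :=
          (Real.sqrt_sq h0).symm
      _ ≤ Real.sqrt (α ^ 2 + β ^ 2) := Real.sqrt_le_sqrt hfin
  linarith [hge]

set_option maxHeartbeats 4000000 in
/-- Strong correlation of second-order critical points with the planted vector:
‖Qᵀz‖₂/n ≥ 1 − 8γc. -/
theorem stmt17 {n : ℕ} (hn : 0 < n) (z : Fin n → ℝ) (hz : ∀ i, z i = 1 ∨ z i = -1)
    (Δ A : Matrix (Fin n) (Fin n) ℝ) (hΔ : Δ.IsSymm)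
    (σ c γ : ℝ) (hc : 0 ≤ c) (hγ : 0 ≤ γ) (hσ : σ = c * Real.sqrt n)
    (h8 : 8 * γ * c ≤ 1)
    (hSDP : ∀ X : Matrix (Fin n) (Fin n) ℝ, X.PosSemidef → (∀ i, X i i = 1) →
      minner Δ X / n ≤ γ * Real.sqrt n)
    (hop : opNorm Δ ≤ γ * Real.sqrt n)
    (hAdef : A = vecMulVec z z + σ • Δ)
    (Q : Matrix (Fin n) (Fin 2) ℝ) (hrows : ∀ i, (Q i 0) ^ 2 + (Q i 1) ^ 2 = 1)
    (hfo : (ddiag (A * Q * Qᵀ) - A) * Q = 0)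
    (hso : (ddiag (A * Q * Qᵀ) - A.hadamard (Q * Qᵀ)).PosSemidef) :
    1 - 8 * γ * c ≤ Real.sqrt (∑ j, (∑ i, Q i j * z i) ^ 2) / n := by
  have hn' : (0:ℝ) < n := by exact_mod_cast hn
  have hn0 : (0:ℝ) ≤ n := le_of_lt hn'
  have hz2 : ∀ i, z i ^ 2 = 1 := by
    intro i; rcases hz i with h | h <;> rw [h] <;> norm_num
  have hA : ∀ i j, A i j = z i * z j + σ * Δ i j := by
    intro i j; rw [hAdef]
    simp [Matrix.add_apply, Matrix.smul_apply, Matrix.vecMulVec_apply, smul_eq_mul]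
  set x : Fin n → ℝ := fun k => Q k 0 with hxd
  set y : Fin n → ℝ := fun k => Q k 1 with hyd
  have hrows' : ∀ i, x i ^ 2 + y i ^ 2 = 1 := by
    intro i; simp only [hxd, hyd]; exact hrows i
  set α : ℝ := ∑ i, x i * z i with hαd
  set β : ℝ := ∑ i, y i * z i with hβd
  set a : ℝ := ∑ i, x i ^ 2 with had
  set b : ℝ := ∑ i, y i ^ 2 with hbd
  set e : ℝ := ∑ i, x i * y i with hed
  have hab : a + b = n := by
    rw [had, hbd, ← Finset.sum_add_distrib]
    simp only [hrows']
    simp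
  have hσ0 : 0 ≤ σ := by rw [hσ]; positivity
  have hσ2 : σ ^ 2 = c ^ 2 * n := by rw [hσ, mul_pow, Real.sq_sqrt hn0]
  have hσγ : σ * (γ * Real.sqrt n) = γ * c * n := by
    rw [hσ, show c * Real.sqrt n * (γ * Real.sqrt n) = γ * c * (Real.sqrt n * Real.sqrt n) from
      by ring, Real.mul_self_sqrt hn0]
  -- operator norm bounds
  have hΔ2 : ∀ p : Fin n → ℝ, ∑ i, ((Δ *ᵥ p) i) ^ 2 ≤ (γ ^ 2 * n) * ∑ i, p i ^ 2 := by
    intro p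
    set f := (Matrix.toEuclideanLin Δ).toContinuousLinearMap with hf
    set v : EuclideanSpace ℝ (Fin n) := (WithLp.equiv 2 (Fin n → ℝ)).symm p with hv
    have h1 : ‖f v‖ ≤ ‖f‖ * ‖v‖ := f.le_opNorm v
    have hfv : ∀ i, f v i = (Δ *ᵥ p) i := by
      intro i; simp [hf, hv, Matrix.toEuclideanLin_apply]
    have hnfv : ‖f v‖ = Real.sqrt (∑ i, ((Δ *ᵥ p) i) ^ 2) := by
      rw [EuclideanSpace.norm_eq]
      congr 1
      refine Finset.sum_congr rfl fun i _ => ?_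
      rw [hfv i, Real.norm_eq_abs, sq_abs]
    have hnv : ‖v‖ = Real.sqrt (∑ i, p i ^ 2) := by
      rw [EuclideanSpace.norm_eq]
      congr 1
      refine Finset.sum_congr rfl fun i _ => ?_
      rw [Real.norm_eq_abs, sq_abs]; rfl
    have h2 : Real.sqrt (∑ i, ((Δ *ᵥ p) i) ^ 2)
        ≤ (γ * Real.sqrt n) * Real.sqrt (∑ i, p i ^ 2) := by
      rw [← hnfv, ← hnv]
      calc ‖f v‖ ≤ ‖f‖ * ‖v‖ := h1
        _ ≤ (γ * Real.sqrt n) * ‖v‖ := mul_le_mul_of_nonneg_right hop (norm_nonneg v)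
    have hs1 : (0:ℝ) ≤ ∑ i, ((Δ *ᵥ p) i) ^ 2 := by positivity
    have hs2 : (0:ℝ) ≤ ∑ i, p i ^ 2 := by positivity
    have h3 : (Real.sqrt (∑ i, ((Δ *ᵥ p) i) ^ 2)) ^ 2
        ≤ ((γ * Real.sqrt n) * Real.sqrt (∑ i, p i ^ 2)) ^ 2 :=
      pow_le_pow_left₀ (Real.sqrt_nonneg _) h2 2
    rw [Real.sq_sqrt hs1, mul_pow, mul_pow, Real.sq_sqrt hs2, Real.sq_sqrt hn0] at h3
    linarith
  have hQF : ∀ p : Fin n → ℝ,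
      |∑ i, p i * (Δ *ᵥ p) i| ≤ γ * Real.sqrt n * ∑ i, p i ^ 2 := by
    intro p
    have hcs := Finset.sum_mul_sq_le_sq_mul_sq Finset.univ p (fun i => (Δ *ᵥ p) i)
    have h2 := hΔ2 p
    have hs2 : (0:ℝ) ≤ ∑ i, p i ^ 2 := by positivity
    have hγn : (0:ℝ) ≤ γ * Real.sqrt n := by positivity
    have h4 : (∑ i, p i * (Δ *ᵥ p) i) ^ 2 ≤ (γ * Real.sqrt n * ∑ i, p i ^ 2) ^ 2 := by
      calc (∑ i, p i * (Δ *ᵥ p) i) ^ 2 ≤ (∑ i, p i ^ 2) * ∑ i, ((Δ *ᵥ p) i) ^ 2 := hcs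
        _ ≤ (∑ i, p i ^ 2) * ((γ ^ 2 * n) * ∑ i, p i ^ 2) :=
            mul_le_mul_of_nonneg_left h2 hs2
        _ = (γ * Real.sqrt n * ∑ i, p i ^ 2) ^ 2 := by
            rw [mul_pow, mul_pow, Real.sq_sqrt hn0]; ring
    calc |∑ i, p i * (Δ *ᵥ p) i| = Real.sqrt ((∑ i, p i * (Δ *ᵥ p) i) ^ 2) :=
          (Real.sqrt_sq_eq_abs _).symm
      _ ≤ Real.sqrt ((γ * Real.sqrt n * ∑ i, p i ^ 2) ^ 2) := Real.sqrt_le_sqrt h4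
      _ = γ * Real.sqrt n * ∑ i, p i ^ 2 := Real.sqrt_sq (by positivity)
  -- first-order conditions
  have hfo' : ddiag (A * Q * Qᵀ) * Q = A * Q := by
    have h := hfo; rwa [Matrix.sub_mul, sub_eq_zero] at h
  have hlam : ∀ (i : Fin n) (k : Fin 2), (A * Q * Qᵀ) i i * Q i k = ∑ j, A i j * Q j k := by
    intro i k
    have h := congrFun (congrFun hfo' i) k
    have hL : (ddiag (A * Q * Qᵀ) * Q) i k = (A * Q * Qᵀ) i i * Q i k := by
      rw [ddiag, Matrix.diagonal_mul]
    have hR : (A * Q) i k = ∑ j, A i j * Q j k := Matrix.mul_apply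
    rw [hL, hR] at h
    exact h
  have hmvx : ∀ i, (Δ *ᵥ x) i = ∑ j, Δ i j * x j := by
    intro i; simp [Matrix.mulVec, dotProduct]
  have hmvy : ∀ i, (Δ *ᵥ y) i = ∑ j, Δ i j * y j := by
    intro i; simp [Matrix.mulVec, dotProduct]
  have hx0 : ∀ i, (A * Q * Qᵀ) i i * x i = z i * α + σ * (Δ *ᵥ x) i := by
    intro i
    have h := hlam i 0
    calc (A * Q * Qᵀ) i i * x i = ∑ j, A i j * Q j 0 := by simp only [hxd]; exact h
      _ = ∑ j, (z i * (x j * z j) + σ * (Δ i j * x j)) := by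
          refine Finset.sum_congr rfl fun j _ => ?_
          simp only [hxd]; rw [hA i j]; ring
      _ = z i * α + σ * (Δ *ᵥ x) i := by
          rw [Finset.sum_add_distrib, ← Finset.mul_sum, ← Finset.mul_sum, ← hαd, hmvx i]
  have hy0 : ∀ i, (A * Q * Qᵀ) i i * y i = z i * β + σ * (Δ *ᵥ y) i := by
    intro i
    have h := hlam i 1
    calc (A * Q * Qᵀ) i i * y i = ∑ j, A i j * Q j 1 := by simp only [hyd]; exact h
      _ = ∑ j, (z i * (y j * z j) + σ * (Δ i j * y j)) := by
          refine Finset.sum_congr rfl fun j _ => ?_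
          simp only [hyd]; rw [hA i j]; ring
      _ = z i * β + σ * (Δ *ᵥ y) i := by
          rw [Finset.sum_add_distrib, ← Finset.mul_sum, ← Finset.mul_sum, ← hβd, hmvy i]
  have hkey : ∀ i, α * y i - β * x i = σ * (z i * ((Δ *ᵥ y) i * x i - (Δ *ᵥ x) i * y i)) := by
    intro i
    linear_combination (-(z i) * y i) * hx0 i + (z i * x i) * hy0 i +
      (β * x i - α * y i) * hz2 i
  -- bound from first-order identity
  have hB : ∑ i, (α * y i - β * x i) ^ 2 ≤ (γ * c) ^ 2 * n ^ 3 := by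
    have hB1 : ∀ i, (α * y i - β * x i) ^ 2 ≤ σ ^ 2 * (((Δ *ᵥ x) i) ^ 2 + ((Δ *ᵥ y) i) ^ 2) := by
      intro i
      rw [hkey i]
      have h3 := hz2 i
      have h4 := hrows' i
      have e1 : ((Δ *ᵥ y) i * x i - (Δ *ᵥ x) i * y i) ^ 2
          + ((Δ *ᵥ x) i * x i + (Δ *ᵥ y) i * y i) ^ 2
          = (((Δ *ᵥ x) i) ^ 2 + ((Δ *ᵥ y) i) ^ 2) * (x i ^ 2 + y i ^ 2) := by ring
      rw [h4, mul_one] at e1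
      have e2 : (σ * (z i * ((Δ *ᵥ y) i * x i - (Δ *ᵥ x) i * y i))) ^ 2
          = σ ^ 2 * (z i ^ 2 * ((Δ *ᵥ y) i * x i - (Δ *ᵥ x) i * y i) ^ 2) := by ring
      rw [e2, h3, one_mul]
      nlinarith [mul_nonneg (sq_nonneg σ) (sq_nonneg ((Δ *ᵥ x) i * x i + (Δ *ᵥ y) i * y i))]
    calc ∑ i, (α * y i - β * x i) ^ 2
        ≤ ∑ i, σ ^ 2 * (((Δ *ᵥ x) i) ^ 2 + ((Δ *ᵥ y) i) ^ 2) :=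
          Finset.sum_le_sum fun i _ => hB1 i
      _ = σ ^ 2 * ((∑ i, ((Δ *ᵥ x) i) ^ 2) + ∑ i, ((Δ *ᵥ y) i) ^ 2) := by
          rw [← Finset.mul_sum, Finset.sum_add_distrib]
      _ ≤ σ ^ 2 * ((γ ^ 2 * n * a) + γ ^ 2 * n * b) := by
          have h1 := hΔ2 x
          have h2 := hΔ2 y
          rw [← had] at h1
          rw [← hbd] at h2
          exact mul_le_mul_of_nonneg_left (add_le_add h1 h2) (sq_nonneg σ)
      _ = (γ * c) ^ 2 * n ^ 3 := by
          rw [hσ2]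
          have : (γ ^ 2 * ↑n * a) + γ ^ 2 * ↑n * b = γ ^ 2 * ↑n * (a + b) := by ring
          rw [this, hab]; ring
  have hLHS : ∑ i, (α * y i - β * x i) ^ 2 = α ^ 2 * b + β ^ 2 * a - 2 * (α * β) * e := by
    calc ∑ i, (α * y i - β * x i) ^ 2
        = ∑ i, (α ^ 2 * y i ^ 2 + β ^ 2 * x i ^ 2 - 2 * (α * β) * (x i * y i)) := by
          refine Finset.sum_congr rfl fun i _ => ?_; ring
      _ = α ^ 2 * b + β ^ 2 * a - 2 * (α * β) * e := by
          rw [Finset.sum_sub_distrib, Finset.sum_add_distrib, ← Finset.mul_sum, ← Finset.mul_sum,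
            ← Finset.mul_sum, ← had, ← hbd, ← hed]
  -- second-order condition
  have hexp : ∀ (d : Fin n → ℝ) (B : Matrix (Fin n) (Fin n) ℝ) (u : Fin n → ℝ),
      star u ⬝ᵥ ((Matrix.diagonal d - B.hadamard (Q * Qᵀ)) *ᵥ u)
      = ∑ i, d i * u i ^ 2 - ∑ i, ∑ j, B i j * (x i * x j + y i * y j) * (u i * u j) := by
    intro d B u
    simp only [hxd, hyd]
    simp only [star_trivial, dotProduct, Matrix.mulVec, Matrix.sub_apply, Matrix.diagonal_apply,
      Matrix.hadamard_apply, Matrix.mul_apply, Matrix.transpose_apply, Fin.sum_univ_two]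
    rw [← Finset.sum_sub_distrib]
    refine Finset.sum_congr rfl fun i _ => ?_
    rw [Finset.mul_sum]
    have h1 : ∀ j, u i * (((if i = j then d i else 0) - B i j * (Q i 0 * Q j 0 + Q i 1 * Q j 1)) * u j)
        = (if i = j then d i * (u i * u j) else 0)
          - B i j * (Q i 0 * Q j 0 + Q i 1 * Q j 1) * (u i * u j) := by
      intro j; split_ifs <;> ring
    rw [Finset.sum_congr rfl fun j _ => h1 j, Finset.sum_sub_distrib, Finset.sum_ite_eq]
    simp only [Finset.mem_univ, if_true]
    ring
  have hso2 : ∀ u : Fin n → ℝ,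
      0 ≤ ∑ i, (A * Q * Qᵀ) i i * u i ^ 2
        - ∑ i, ∑ j, A i j * (x i * x j + y i * y j) * (u i * u j) := by
    intro u
    have h := hso.dotProduct_mulVec_nonneg u
    have hdd : ddiag (A * Q * Qᵀ) = Matrix.diagonal (fun i => (A * Q * Qᵀ) i i) := rfl
    rw [hdd, hexp] at h
    exact h
  set u1 : Fin n → ℝ := fun k => z k * x k with hu1d
  set u2 : Fin n → ℝ := fun k => z k * y k with hu2d
  set uu : Fin n → ℝ := fun k => z k * x k ^ 2 with huud
  set vv : Fin n → ℝ := fun k => z k * (x k * y k) with hvvd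
  set ww : Fin n → ℝ := fun k => z k * y k ^ 2 with hwwd
  have hG1 : (∑ i, (A * Q * Qᵀ) i i * u1 i ^ 2) + ∑ i, (A * Q * Qᵀ) i i * u2 i ^ 2
      = (α ^ 2 + β ^ 2) + σ * ((∑ i, x i * (Δ *ᵥ x) i) + ∑ i, y i * (Δ *ᵥ y) i) := by
    rw [← Finset.sum_add_distrib]
    calc ∑ i, ((A * Q * Qᵀ) i i * u1 i ^ 2 + (A * Q * Qᵀ) i i * u2 i ^ 2)
        = ∑ i, (α * (x i * z i) + β * (y i * z i)
            + (σ * (x i * (Δ *ᵥ x) i) + σ * (y i * (Δ *ᵥ y) i))) := by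
          refine Finset.sum_congr rfl fun i _ => ?_
          simp only [hu1d, hu2d]
          linear_combination (z i ^ 2 * x i) * hx0 i + (z i ^ 2 * y i) * hy0 i +
            (α * (x i * z i) + β * (y i * z i) + σ * (x i * (Δ *ᵥ x) i)
              + σ * (y i * (Δ *ᵥ y) i)) * hz2 i
      _ = (α ^ 2 + β ^ 2) + σ * ((∑ i, x i * (Δ *ᵥ x) i) + ∑ i, y i * (Δ *ᵥ y) i) := by
          rw [Finset.sum_add_distrib, Finset.sum_add_distrib, Finset.sum_add_distrib,
            ← Finset.mul_sum, ← Finset.mul_sum, ← Finset.mul_sum, ← Finset.mul_sum,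
            ← hαd, ← hβd]
          ring
  have e1 : (∑ i, ∑ j, x i ^ 2 * x j ^ 2) = a ^ 2 := by
    rw [had, sq, Finset.sum_mul_sum]
  have e3 : (∑ i, ∑ j, y i ^ 2 * y j ^ 2) = b ^ 2 := by
    rw [hbd, sq, Finset.sum_mul_sum]
  have e2 : (∑ i, ∑ j, (x i * y i) * (x j * y j)) = e ^ 2 := by
    rw [hed, sq, Finset.sum_mul_sum]
  have hmv : ∀ (p : Fin n → ℝ) (i : Fin n), (Δ *ᵥ p) i = ∑ j, Δ i j * p j := by
    intro p i; rfl
  have eQ : ∀ p : Fin n → ℝ, (∑ i, ∑ j, Δ i j * (p i * p j)) = ∑ i, p i * (Δ *ᵥ p) i := by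
    intro p
    refine Finset.sum_congr rfl fun i _ => ?_
    rw [hmv p i, Finset.mul_sum]
    refine Finset.sum_congr rfl fun j _ => by ring
  have hG2 : ∑ i, ∑ j, (A i j * (x i * x j + y i * y j) * (u1 i * u1 j)
        + A i j * (x i * x j + y i * y j) * (u2 i * u2 j))
      = (a ^ 2 + 2 * e ^ 2 + b ^ 2)
        + σ * ((∑ i, uu i * (Δ *ᵥ uu) i) + 2 * (∑ i, vv i * (Δ *ᵥ vv) i)
          + ∑ i, ww i * (Δ *ᵥ ww) i) := by
    calc ∑ i, ∑ j, (A i j * (x i * x j + y i * y j) * (u1 i * u1 j)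
          + A i j * (x i * x j + y i * y j) * (u2 i * u2 j))
        = ∑ i, ∑ j, (x i ^ 2 * x j ^ 2 + 2 * ((x i * y i) * (x j * y j)) + y i ^ 2 * y j ^ 2
            + σ * (Δ i j * (uu i * uu j) + 2 * (Δ i j * (vv i * vv j))
              + Δ i j * (ww i * ww j))) := by
          refine Finset.sum_congr rfl fun i _ => Finset.sum_congr rfl fun j _ => ?_
          simp only [hu1d, hu2d, huud, hvvd, hwwd]
          rw [hA i j]
          linear_combination (z j ^ 2 * (x i * x j + y i * y j) ^ 2) * hz2 i
            + ((x i * x j + y i * y j) ^ 2) * hz2 j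
      _ = (∑ i, ∑ j, x i ^ 2 * x j ^ 2) + 2 * (∑ i, ∑ j, (x i * y i) * (x j * y j))
            + (∑ i, ∑ j, y i ^ 2 * y j ^ 2)
            + σ * ((∑ i, ∑ j, Δ i j * (uu i * uu j)) + 2 * (∑ i, ∑ j, Δ i j * (vv i * vv j))
              + ∑ i, ∑ j, Δ i j * (ww i * ww j)) :=
          dsum6 σ _ _ _ _ _ _
      _ = (a ^ 2 + 2 * e ^ 2 + b ^ 2)
            + σ * ((∑ i, uu i * (Δ *ᵥ uu) i) + 2 * (∑ i, vv i * (Δ *ᵥ vv) i)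
              + ∑ i, ww i * (Δ *ᵥ ww) i) := by
          rw [e1, e2, e3, eQ uu, eQ vv, eQ ww]
  have hsum4 : (∑ i, uu i ^ 2) + 2 * (∑ i, vv i ^ 2) + (∑ i, ww i ^ 2) = (n : ℝ) := by
    have h1 : ∀ i, uu i ^ 2 + 2 * vv i ^ 2 + ww i ^ 2 = 1 := by
      intro i
      simp only [huud, hvvd, hwwd]
      linear_combination ((x i ^ 2 + y i ^ 2) ^ 2) * hz2 i + (x i ^ 2 + y i ^ 2 + 1) * hrows' i
    have h2 : ∑ i, (uu i ^ 2 + 2 * vv i ^ 2 + ww i ^ 2) = (n : ℝ) := by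
      simp only [h1]; simp
    rw [← h2, Finset.sum_add_distrib, Finset.sum_add_distrib, ← Finset.mul_sum]
  have hDsum : (∑ i, ∑ j, A i j * (x i * x j + y i * y j) * (u1 i * u1 j))
      + (∑ i, ∑ j, A i j * (x i * x j + y i * y j) * (u2 i * u2 j))
      = ∑ i, ∑ j, (A i j * (x i * x j + y i * y j) * (u1 i * u1 j)
        + A i j * (x i * x j + y i * y j) * (u2 i * u2 j)) := by
    simp only [← Finset.sum_add_distrib]
  have hb1 : σ * ((∑ i, x i * (Δ *ᵥ x) i) + ∑ i, y i * (Δ *ᵥ y) i)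
      ≤ γ * c * (n : ℝ) * (n : ℝ) := by
    have h1 := (abs_le.mp (hQF x)).2
    have h2 := (abs_le.mp (hQF y)).2
    have hfact : γ * Real.sqrt n * (∑ i, x i ^ 2) + γ * Real.sqrt n * (∑ i, y i ^ 2)
        = γ * Real.sqrt n * (n : ℝ) := by
      rw [← had, ← hbd, ← mul_add, hab]
    have hS : (∑ i, x i * (Δ *ᵥ x) i) + ∑ i, y i * (Δ *ᵥ y) i ≤ γ * Real.sqrt n * (n : ℝ) := by
      linarith
    calc σ * ((∑ i, x i * (Δ *ᵥ x) i) + ∑ i, y i * (Δ *ᵥ y) i)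
        ≤ σ * (γ * Real.sqrt n * (n : ℝ)) := mul_le_mul_of_nonneg_left hS hσ0
      _ = γ * c * (n : ℝ) * (n : ℝ) := by rw [← mul_assoc, hσγ]
  have hb2 : -(γ * c * (n : ℝ) * (n : ℝ))
      ≤ σ * ((∑ i, uu i * (Δ *ᵥ uu) i) + 2 * (∑ i, vv i * (Δ *ᵥ vv) i)
        + ∑ i, ww i * (Δ *ᵥ ww) i) := by
    have h1 := (abs_le.mp (hQF uu)).1
    have h2 := (abs_le.mp (hQF vv)).1
    have h3 := (abs_le.mp (hQF ww)).1
    have hfact := congrArg (fun t => γ * Real.sqrt n * t) hsum4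
    simp only [mul_add] at hfact
    have hT : -(γ * Real.sqrt n * (n : ℝ))
        ≤ (∑ i, uu i * (Δ *ᵥ uu) i) + 2 * (∑ i, vv i * (Δ *ᵥ vv) i)
          + ∑ i, ww i * (Δ *ᵥ ww) i := by
      nlinarith [h1, h2, h3, hfact]
    have := mul_le_mul_of_nonneg_left hT hσ0
    calc -(γ * c * (n : ℝ) * (n : ℝ)) = σ * (-(γ * Real.sqrt n * (n : ℝ))) := by
          linear_combination (n : ℝ) * hσγ
      _ ≤ σ * ((∑ i, uu i * (Δ *ᵥ uu) i) + 2 * (∑ i, vv i * (Δ *ᵥ vv) i)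
          + ∑ i, ww i * (Δ *ᵥ ww) i) := this
  have hC : a ^ 2 + 2 * e ^ 2 + b ^ 2 - 2 * (γ * c) * ((n : ℝ) * (n : ℝ)) ≤ α ^ 2 + β ^ 2 := by
    have hM1 := hso2 u1
    have hM2 := hso2 u2
    linarith [hM1, hM2, hG1, hG2, hDsum, hb1, hb2]
  have hCS : e ^ 2 ≤ a * b := by
    rw [had, hbd, hed]; exact Finset.sum_mul_sq_le_sq_mul_sq Finset.univ x y
  have hge : (n : ℝ) * (1 - 8 * (γ * c)) ≤ Real.sqrt (α ^ 2 + β ^ 2) := by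
    refine corrTail a b e α β γ c (∑ i, (α * y i - β * x i) ^ 2) (n : ℝ) hn' hγ hc h8 hab ?_
      hLHS ?_ ?_
    · exact hB
    · nlinarith [hCS]
    · exact hC
  have hα' : α = ∑ i, Q i 0 * z i := by rw [hαd]
  have hβ' : β = ∑ i, Q i 1 * z i := by rw [hβd]
  have hgoal : ∑ j, (∑ i, Q i j * z i) ^ 2 = α ^ 2 + β ^ 2 := by
    rw [Fin.sum_univ_two, hα', hβ']
  rw [hgoal, le_div_iff₀ hn']
  nlinarith [hge, Real.sqrt_nonneg (α ^ 2 + β ^ 2)]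
end

section
/- Let x, y ∈ ℝⁿ with ⟨x,y⟩ = 0 and Δ symmetric with ‖Δ‖ ≤ γ√n, ‖x‖² + ‖y‖² = n, σ ≥ 0. If ⟨𝟙,x⟩y − ⟨𝟙,y⟩x = σ(Δy)∘x − σ(Δx)∘y, then ⟨𝟙,x⟩²‖y‖² + ⟨𝟙,y⟩²‖x‖² ≤ σ²(2γn)²·(n/n) = 4σ²γ²n·n, i.e., ⟨𝟙,x⟩²‖y‖² + ⟨𝟙,y⟩²‖x‖² ≤ σ²(‖Δy‖₂ + ‖Δx‖₂)² ≤ 4σ²γ²n². -/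
open Matrix BigOperators

lemma mulVec_sq_bound {n : ℕ} (M : Matrix (Fin n) (Fin n) ℝ) (v : Fin n → ℝ) :
    ∑ i, (M.mulVec v i) ^ 2 ≤ (opNorm M) ^ 2 * ∑ i, (v i) ^ 2 := by
  set V : EuclideanSpace ℝ (Fin n) := (WithLp.equiv 2 (Fin n → ℝ)).symm v
  have h1 : ‖(Matrix.toEuclideanLin M).toContinuousLinearMap V‖ ≤ opNorm M * ‖V‖ :=
    ContinuousLinearMap.le_opNorm _ V
  have hMV : (Matrix.toEuclideanLin M).toContinuousLinearMap V
      = (WithLp.equiv 2 (Fin n → ℝ)).symm (M.mulVec v) := by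
    simpa [V] using Matrix.toEuclideanLin_apply_piLp_equiv_symm M v
  have hnorm : ∀ w : Fin n → ℝ,
      ‖(WithLp.equiv 2 (Fin n → ℝ)).symm w‖ ^ 2 = ∑ i, (w i) ^ 2 := by
    intro w
    rw [EuclideanSpace.norm_eq, Real.sq_sqrt (by positivity)]
    simp [sq_abs]
  have h2 : ‖(Matrix.toEuclideanLin M).toContinuousLinearMap V‖ ^ 2
      ≤ (opNorm M * ‖V‖) ^ 2 := by
    apply sq_le_sq' _ h1
    nlinarith [norm_nonneg ((Matrix.toEuclideanLin M).toContinuousLinearMap V)]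
  rw [hMV, hnorm] at h2
  calc ∑ i, (M.mulVec v i) ^ 2 ≤ (opNorm M * ‖V‖) ^ 2 := h2
    _ = (opNorm M) ^ 2 * ‖V‖ ^ 2 := by ring
    _ = (opNorm M) ^ 2 * ∑ i, (v i) ^ 2 := by rw [hnorm v]

/-- From the first-order identity, bound ⟨𝟙,x⟩²‖y‖² + ⟨𝟙,y⟩²‖x‖² ≤ 4σ²γ²n². -/
theorem stmt18 {n : ℕ} (x y : Fin n → ℝ) (hxy : ∑ i, x i * y i = 0)
    (hrows : ∀ i, (x i) ^ 2 + (y i) ^ 2 = 1)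
    (Δ : Matrix (Fin n) (Fin n) ℝ) (hΔ : Δ.IsSymm)
    (γ σ : ℝ) (hσ : 0 ≤ σ) (hγ : 0 ≤ γ) (hop : opNorm Δ ≤ γ * Real.sqrt n)
    (hfo : ∀ i, (∑ k, x k) * y i - (∑ k, y k) * x i
      = σ * (Δ.mulVec y i * x i) - σ * (Δ.mulVec x i * y i)) :
    (∑ k, x k) ^ 2 * (∑ i, (y i) ^ 2) + (∑ k, y k) ^ 2 * (∑ i, (x i) ^ 2)
      ≤ 4 * σ ^ 2 * γ ^ 2 * (n : ℝ) ^ 2 := by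
  set a := ∑ k, x k
  set b := ∑ k, y k
  -- LHS as sum of squares
  have hL : a ^ 2 * (∑ i, (y i) ^ 2) + b ^ 2 * (∑ i, (x i) ^ 2)
      = ∑ i, (a * y i - b * x i) ^ 2 := by
    have h1 : ∑ i, (a * y i - b * x i) ^ 2
        = ∑ i, (a ^ 2 * (y i) ^ 2 + b ^ 2 * (x i) ^ 2 - 2 * a * b * (x i * y i)) := by
      apply Finset.sum_congr rfl; intro i _; ring
    rw [h1, Finset.sum_sub_distrib, Finset.sum_add_distrib, ← Finset.mul_sum,
      ← Finset.mul_sum, ← Finset.mul_sum, hxy]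
    ring
  -- bound each square
  have hbi : ∀ i, (x i) ^ 2 ≤ 1 ∧ (y i) ^ 2 ≤ 1 := by
    intro i
    constructor <;> nlinarith [hrows i, sq_nonneg (x i), sq_nonneg (y i)]
  have hsum : ∑ i, (a * y i - b * x i) ^ 2
      ≤ 2 * σ ^ 2 * (∑ i, (Δ.mulVec y i) ^ 2 + ∑ i, (Δ.mulVec x i) ^ 2) := by
    have hr : 2 * σ ^ 2 * (∑ i, (Δ.mulVec y i) ^ 2 + ∑ i, (Δ.mulVec x i) ^ 2)
        = ∑ i, 2 * σ ^ 2 * ((Δ.mulVec y i) ^ 2 + (Δ.mulVec x i) ^ 2) := by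
      rw [← Finset.mul_sum, Finset.sum_add_distrib]
    rw [hr]
    apply Finset.sum_le_sum
    intro i _
    rw [hfo i]
    have h1 := (hbi i).1
    have h2 := (hbi i).2
    nlinarith [sq_nonneg (Δ.mulVec y i), sq_nonneg (Δ.mulVec x i),
      sq_nonneg (Δ.mulVec y i * x i + Δ.mulVec x i * y i), sq_nonneg σ,
      mul_le_mul_of_nonneg_left h1 (mul_nonneg (sq_nonneg σ) (sq_nonneg (Δ.mulVec y i))),
      mul_le_mul_of_nonneg_left h2 (mul_nonneg (sq_nonneg σ) (sq_nonneg (Δ.mulVec x i)))]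
  -- operator norm bounds
  have hopsq : (opNorm Δ) ^ 2 ≤ γ ^ 2 * n := by
    have h0 : (0:ℝ) ≤ opNorm Δ := norm_nonneg _
    have := sq_le_sq' (by linarith [mul_nonneg hγ (Real.sqrt_nonneg (n:ℝ))]) hop
    calc (opNorm Δ)^2 ≤ (γ * Real.sqrt n)^2 := this
      _ = γ^2 * (Real.sqrt n)^2 := by ring
      _ = γ^2 * n := by rw [Real.sq_sqrt (Nat.cast_nonneg n)]
  have hx := mulVec_sq_bound Δ x
  have hy := mulVec_sq_bound Δ y
  have hsn : (∑ i, (x i) ^ 2) + (∑ i, (y i) ^ 2) = n := by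
    rw [← Finset.sum_add_distrib]
    simp [hrows]
  have hxn : ∑ i, (x i) ^ 2 ≤ n := by
    have : (0:ℝ) ≤ ∑ i, (y i)^2 := Finset.sum_nonneg fun i _ => sq_nonneg _
    linarith
  have hyn : ∑ i, (y i) ^ 2 ≤ n := by
    have : (0:ℝ) ≤ ∑ i, (x i)^2 := Finset.sum_nonneg fun i _ => sq_nonneg _
    linarith
  have hΔx : ∑ i, (Δ.mulVec x i) ^ 2 ≤ γ ^ 2 * n * n := by
    calc ∑ i, (Δ.mulVec x i) ^ 2 ≤ (opNorm Δ)^2 * ∑ i, (x i)^2 := hx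
      _ ≤ (γ^2 * n) * n := by
          apply mul_le_mul hopsq hxn (Finset.sum_nonneg fun i _ => sq_nonneg _) (by positivity)
      _ = γ^2 * n * n := by ring
  have hΔy : ∑ i, (Δ.mulVec y i) ^ 2 ≤ γ ^ 2 * n * n := by
    calc ∑ i, (Δ.mulVec y i) ^ 2 ≤ (opNorm Δ)^2 * ∑ i, (y i)^2 := hy
      _ ≤ (γ^2 * n) * n := by
          apply mul_le_mul hopsq hyn (Finset.sum_nonneg fun i _ => sq_nonneg _) (by positivity)
      _ = γ^2 * n * n := by ring
  rw [hL]
  calc ∑ i, (a * y i - b * x i) ^ 2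
      ≤ 2 * σ ^ 2 * (∑ i, (Δ.mulVec y i) ^ 2 + ∑ i, (Δ.mulVec x i) ^ 2) := hsum
    _ ≤ 2 * σ ^ 2 * (γ^2 * n * n + γ^2 * n * n) := by
        apply mul_le_mul_of_nonneg_left (add_le_add hΔy hΔx) (by positivity)
    _ = 4 * σ ^ 2 * γ ^ 2 * (n:ℝ) ^ 2 := by ring
end
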